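/- arXiv:1910.13358 — 5 statements merged into one kernel-verified Lean document; each statement's English description precedes it below -/
import Mathlib

section
/- Let β > 0 and β* := max(β, 2β−2). If E‖X‖^{β*} < ∞, then ĥ_X is square-integrable (in particular integrable, so t̃_X is defined) and t̃_X is square-integrable: E[ĥ_X²] < ∞ and E[t̃_X²] < ∞. -/
open MeasureTheory ProbabilityTheory

noncomputable section

section AuxReal

/-- If `0 ≤ p ≤ q` then `x ^ p ≤ 1 + x ^ q` for `x ≥ 0`. -/
lemma aux_rpow_le_one_add_rpow {x p q : ℝ} (hx : 0 ≤ x) (hp : 0 ≤ p) (hpq : p ≤ q) :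
    x ^ p ≤ 1 + x ^ q := by
  rcases le_total x 1 with h | h
  · have h1 : x ^ p ≤ 1 := Real.rpow_le_one hx h hp
    have h2 : 0 ≤ x ^ q := Real.rpow_nonneg hx q
    linarith
  · have h1 : x ^ p ≤ x ^ q := Real.rpow_le_rpow_of_exponent_le h hpq
    linarith

lemma aux_add_rpow_le {x y p : ℝ} (hx : 0 ≤ x) (hy : 0 ≤ y) (hp : 0 ≤ p) (hp1 : p ≤ 1) :
    (x + y) ^ p ≤ x ^ p + y ^ p := by
  lift x to NNReal using hx
  lift y to NNReal using hy
  have h := NNReal.rpow_add_le_add_rpow x y hp hp1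
  have h' : ((x + y : NNReal) : ℝ) ^ p ≤ ((x : ℝ)) ^ p + ((y : ℝ)) ^ p := by
    rw [← NNReal.coe_rpow, ← NNReal.coe_rpow, ← NNReal.coe_rpow]
    exact_mod_cast h
  simpa using h'

lemma aux_abs_rpow_sub_rpow_small {x y p : ℝ} (hx : 0 ≤ x) (hy : 0 ≤ y) (hp : 0 < p)
    (hp1 : p ≤ 1) : |x ^ p - y ^ p| ≤ |x - y| ^ p := by
  wlog h : y ≤ x with H
  · push_neg at h
    rw [abs_sub_comm, abs_sub_comm x y]
    exact H hy hx hp hp1 h.le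
  have h1 : x ^ p ≤ y ^ p + (x - y) ^ p := by
    have := aux_add_rpow_le hy (by linarith : (0:ℝ) ≤ x - y) hp.le hp1
    calc x ^ p = (y + (x - y)) ^ p := by ring_nf
    _ ≤ y ^ p + (x - y) ^ p := this
  have h2 : y ^ p ≤ x ^ p := Real.rpow_le_rpow hy h hp.le
  rw [abs_of_nonneg (by linarith : (0:ℝ) ≤ x ^ p - y ^ p),
    abs_of_nonneg (by linarith : (0:ℝ) ≤ x - y)]
  linarith

/-- Mean value type inequality for `rpow` with exponent `≥ 1`. -/
lemma aux_rpow_sub_rpow_big {x y p : ℝ} (hy : 0 ≤ y) (hxy : y ≤ x) (hp : 1 ≤ p) :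
    x ^ p - y ^ p ≤ p * x ^ (p - 1) * (x - y) := by
  have hx : 0 ≤ x := hy.trans hxy
  rcases eq_or_lt_of_le hx with h0 | h0
  · have hx0 : x = 0 := h0.symm
    have hy0 : y = 0 := le_antisymm (hxy.trans_eq hx0) hy
    rw [hx0, hy0]
    rw [Real.zero_rpow (by linarith : p ≠ 0)]
    simp
  · set r := y / x with hr_def
    have hr0 : 0 ≤ r := div_nonneg hy hx
    have hr1 : r ≤ 1 := div_le_one_of_le₀ hxy hx
    have hb : 1 + p * (r - 1) ≤ (1 + (r - 1)) ^ p :=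
      one_add_mul_self_le_rpow_one_add (by linarith) hp
    have h1r : (1 + (r - 1)) = r := by ring
    rw [h1r] at hb
    have hyx : y = x * r := by
      rw [hr_def]; field_simp
    have hyp : y ^ p = x ^ p * r ^ p := by
      rw [hyx, Real.mul_rpow hx hr0]
    have hxppos : 0 ≤ x ^ p := Real.rpow_nonneg hx p
    have key : x ^ p - y ^ p ≤ x ^ p * (p * (1 - r)) := by
      rw [hyp]
      nlinarith [hxppos, hb]
    have hxp : x ^ p = x ^ (p - 1) * x := by
      rw [show p = (p - 1) + 1 by ring, Real.rpow_add_one (ne_of_gt h0)]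
      ring_nf
    calc x ^ p - y ^ p ≤ x ^ p * (p * (1 - r)) := key
    _ = p * x ^ (p - 1) * (x - y) := by
        rw [hxp, hyx, hr_def]
        field_simp

lemma aux_abs_rpow_sub_rpow_big {x y M p : ℝ} (hx : 0 ≤ x) (hy : 0 ≤ y) (hxM : x ≤ M)
    (hyM : y ≤ M) (hp : 1 ≤ p) : |x ^ p - y ^ p| ≤ p * M ^ (p - 1) * |x - y| := by
  wlog h : y ≤ x with H
  · push_neg at h
    rw [abs_sub_comm, abs_sub_comm x y]
    exact H hy hx hyM hxM hp h.le
  have hM : 0 ≤ M := hx.trans hxM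
  have h2 : y ^ p ≤ x ^ p := Real.rpow_le_rpow hy h (by linarith)
  rw [abs_of_nonneg (by linarith : (0:ℝ) ≤ x ^ p - y ^ p),
    abs_of_nonneg (by linarith : (0:ℝ) ≤ x - y)]
  calc x ^ p - y ^ p ≤ p * x ^ (p - 1) * (x - y) := aux_rpow_sub_rpow_big hy h hp
  _ ≤ p * M ^ (p - 1) * (x - y) := by
      have hMx : x ^ (p - 1) ≤ M ^ (p - 1) := Real.rpow_le_rpow hx hxM (by linarith)
      have := mul_le_mul_of_nonneg_right
        (mul_le_mul_of_nonneg_left hMx (by linarith : (0:ℝ) ≤ p))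
        (by linarith : (0:ℝ) ≤ x - y)
      linarith

lemma aux_add_rpow_le_two_rpow {x y p : ℝ} (hx : 0 ≤ x) (hy : 0 ≤ y) (hp : 0 ≤ p) :
    (x + y) ^ p ≤ 2 ^ p * (x ^ p + y ^ p) := by
  have h1 : x + y ≤ 2 * max x y := by
    rcases le_total x y with h | h
    · have := max_eq_right h; nlinarith [le_max_left x y, le_max_right x y]
    · nlinarith [le_max_left x y, le_max_right x y]
  have hmax0 : 0 ≤ max x y := le_max_of_le_left hx
  calc (x + y) ^ p ≤ (2 * max x y) ^ p :=
        Real.rpow_le_rpow (by linarith) h1 hp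
  _ = 2 ^ p * (max x y) ^ p := Real.mul_rpow (by norm_num) hmax0
  _ ≤ 2 ^ p * (x ^ p + y ^ p) := by
      have h2 : (max x y) ^ p ≤ x ^ p + y ^ p := by
        rcases max_cases x y with ⟨h, _⟩ | ⟨h, _⟩ <;> rw [h]
        · nlinarith [Real.rpow_nonneg hy p]
        · nlinarith [Real.rpow_nonneg hx p]
      have h3 : (0:ℝ) ≤ 2 ^ p := Real.rpow_nonneg (by norm_num) p
      nlinarith

end AuxReal

section QuadBound

/-- Pointwise bound on the square of the alternating sum, case `β ≤ 1`. -/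
lemma quad_bound_small {β s t u v z w A B : ℝ} (hβ : 0 < β) (hβ1 : β ≤ 1)
    (h0s : 0 ≤ s) (h0t : 0 ≤ t) (h0u : 0 ≤ u) (h0v : 0 ≤ v)
    (h0z : 0 ≤ z) (h0w : 0 ≤ w) (hA0 : 0 ≤ A) (hB0 : 0 ≤ B)
    (hst : |s - t| ≤ z) (huv : |u - v| ≤ z) (hsv : |s - v| ≤ w) (htu : |t - u| ≤ w)
    (hzA : z ≤ A) (hwB : w ≤ B) :
    (s ^ β - t ^ β + u ^ β - v ^ β) ^ 2 ≤ 4 * ((1 + A ^ β) * (1 + B ^ β)) := by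
  set h := s ^ β - t ^ β + u ^ β - v ^ β with hh_def
  have hb1 : |s ^ β - t ^ β| ≤ z ^ β :=
    (aux_abs_rpow_sub_rpow_small h0s h0t hβ hβ1).trans
      (Real.rpow_le_rpow (abs_nonneg _) hst hβ.le)
  have hb2 : |u ^ β - v ^ β| ≤ z ^ β :=
    (aux_abs_rpow_sub_rpow_small h0u h0v hβ hβ1).trans
      (Real.rpow_le_rpow (abs_nonneg _) huv hβ.le)
  have hb3 : |s ^ β - v ^ β| ≤ w ^ β :=
    (aux_abs_rpow_sub_rpow_small h0s h0v hβ hβ1).trans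
      (Real.rpow_le_rpow (abs_nonneg _) hsv hβ.le)
  have hb4 : |t ^ β - u ^ β| ≤ w ^ β :=
    (aux_abs_rpow_sub_rpow_small h0t h0u hβ hβ1).trans
      (Real.rpow_le_rpow (abs_nonneg _) htu hβ.le)
  have hz : |h| ≤ 2 * z ^ β := by
    have he : h = (s ^ β - t ^ β) + (u ^ β - v ^ β) := by rw [hh_def]; ring
    rw [he]
    calc |(s ^ β - t ^ β) + (u ^ β - v ^ β)| ≤ |s ^ β - t ^ β| + |u ^ β - v ^ β| :=
          abs_add_le _ _
    _ ≤ 2 * z ^ β := by linarith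
  have hw : |h| ≤ 2 * w ^ β := by
    have he : h = (s ^ β - v ^ β) + -(t ^ β - u ^ β) := by rw [hh_def]; ring
    rw [he]
    calc |(s ^ β - v ^ β) + -(t ^ β - u ^ β)| ≤ |s ^ β - v ^ β| + |-(t ^ β - u ^ β)| :=
          abs_add_le _ _
    _ = |s ^ β - v ^ β| + |t ^ β - u ^ β| := by rw [abs_neg]
    _ ≤ 2 * w ^ β := by linarith
  have hzb : z ^ β ≤ 1 + A ^ β := by
    have := Real.rpow_le_rpow h0z hzA hβ.le
    have h2 : 0 ≤ A ^ β := Real.rpow_nonneg hA0 β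
    linarith
  have hwb : w ^ β ≤ 1 + B ^ β := by
    have := Real.rpow_le_rpow h0w hwB hβ.le
    have h2 : 0 ≤ B ^ β := Real.rpow_nonneg hB0 β
    linarith
  have hz0 : (0:ℝ) ≤ z ^ β := Real.rpow_nonneg h0z β
  have hw0 : (0:ℝ) ≤ w ^ β := Real.rpow_nonneg h0w β
  calc h ^ 2 = |h| * |h| := by rw [sq]; exact (abs_mul_abs_self h).symm
  _ ≤ (2 * z ^ β) * (2 * w ^ β) :=
      mul_le_mul hz hw (abs_nonneg _) (by linarith)
  _ = 4 * (z ^ β * w ^ β) := by ring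
  _ ≤ 4 * ((1 + A ^ β) * (1 + B ^ β)) := by
      have := mul_le_mul hzb hwb hw0 (by nlinarith [Real.rpow_nonneg hA0 β])
      linarith

/-- Pointwise bound on the square of the alternating sum, case `β ≥ 1`. -/
lemma quad_bound_big {β s t u v z w A B : ℝ} (hβ1 : 1 ≤ β)
    (h0s : 0 ≤ s) (h0t : 0 ≤ t) (h0u : 0 ≤ u) (h0v : 0 ≤ v)
    (h0z : 0 ≤ z) (h0w : 0 ≤ w) (hA0 : 0 ≤ A) (hB0 : 0 ≤ B)
    (hst : |s - t| ≤ z) (huv : |u - v| ≤ z) (hsv : |s - v| ≤ w) (htu : |t - u| ≤ w)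
    (hzA : z ≤ A) (hwB : w ≤ B)
    (hsM : s ≤ A + B) (htM : t ≤ A + B) (huM : u ≤ A + B) (hvM : v ≤ A + B) :
    (s ^ β - t ^ β + u ^ β - v ^ β) ^ 2 ≤
      8 * β ^ 2 * 2 ^ (2 * β - 2) *
        ((1 + A ^ (2 * β - min β 2)) * (1 + B ^ (2 * β - min β 2))) := by
  set γ := min β 2 with hγ_def
  have hγ1 : 1 ≤ γ := le_min hβ1 one_le_two
  have hγ2 : γ ≤ 2 := min_le_right _ _
  have hγβ : γ ≤ β := min_le_left _ _
  have hbsγ : β ≤ 2 * β - γ := by linarith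
  have hbs0 : (0:ℝ) < 2 * β - γ := by linarith
  set M := A + B with hM_def
  have hM0 : 0 ≤ M := by rw [hM_def]; linarith
  set K := β * M ^ (β - 1) with hK_def
  have hMp0 : 0 ≤ M ^ (β - 1) := Real.rpow_nonneg hM0 _
  have hK0 : 0 ≤ K := by rw [hK_def]; exact mul_nonneg (by linarith) hMp0
  set h := s ^ β - t ^ β + u ^ β - v ^ β with hh_def
  have hb1 : |s ^ β - t ^ β| ≤ K * z := by
    refine (aux_abs_rpow_sub_rpow_big h0s h0t hsM htM hβ1).trans ?_
    rw [hK_def]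
    exact mul_le_mul_of_nonneg_left hst (mul_nonneg (by linarith) hMp0)
  have hb2 : |u ^ β - v ^ β| ≤ K * z := by
    refine (aux_abs_rpow_sub_rpow_big h0u h0v huM hvM hβ1).trans ?_
    rw [hK_def]
    exact mul_le_mul_of_nonneg_left huv (mul_nonneg (by linarith) hMp0)
  have hb3 : |s ^ β - v ^ β| ≤ K * w := by
    refine (aux_abs_rpow_sub_rpow_big h0s h0v hsM hvM hβ1).trans ?_
    rw [hK_def]
    exact mul_le_mul_of_nonneg_left hsv (mul_nonneg (by linarith) hMp0)
  have hb4 : |t ^ β - u ^ β| ≤ K * w := by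
    refine (aux_abs_rpow_sub_rpow_big h0t h0u htM huM hβ1).trans ?_
    rw [hK_def]
    exact mul_le_mul_of_nonneg_left htu (mul_nonneg (by linarith) hMp0)
  have hz : |h| ≤ 2 * K * z := by
    have he : h = (s ^ β - t ^ β) + (u ^ β - v ^ β) := by rw [hh_def]; ring
    rw [he]
    calc |(s ^ β - t ^ β) + (u ^ β - v ^ β)| ≤ |s ^ β - t ^ β| + |u ^ β - v ^ β| :=
          abs_add_le _ _
    _ ≤ 2 * K * z := by linarith
  have hw : |h| ≤ 2 * K * w := by
    have he : h = (s ^ β - v ^ β) + -(t ^ β - u ^ β) := by rw [hh_def]; ring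
    rw [he]
    calc |(s ^ β - v ^ β) + -(t ^ β - u ^ β)| ≤ |s ^ β - v ^ β| + |-(t ^ β - u ^ β)| :=
          abs_add_le _ _
    _ = |s ^ β - v ^ β| + |t ^ β - u ^ β| := by rw [abs_neg]
    _ ≤ 2 * K * w := by linarith
  have hmin0 : 0 ≤ min z w := le_min h0z h0w
  have hmin : |h| ≤ 2 * K * min z w := by
    rcases le_total z w with hzw | hzw
    · rw [min_eq_left hzw]; exact hz
    · rw [min_eq_right hzw]; exact hw
  have hsq : h ^ 2 ≤ 4 * K ^ 2 * (min z w) ^ 2 := by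
    have h1 := mul_self_le_mul_self (abs_nonneg h) hmin
    calc h ^ 2 = |h| * |h| := by rw [sq]; exact (abs_mul_abs_self h).symm
    _ ≤ (2 * K * min z w) * (2 * K * min z w) := h1
    _ = 4 * K ^ 2 * (min z w) ^ 2 := by ring
  have hK2 : K ^ 2 = β ^ 2 * M ^ (2 * β - 2) := by
    have hMM : (M ^ (β - 1)) ^ 2 = M ^ (2 * β - 2) := by
      rw [show (2 * β - 2) = (β - 1) * 2 by ring, Real.rpow_mul hM0, Real.rpow_two]
    rw [hK_def, mul_pow, hMM]
  have hminsplit : ∀ p q : ℝ, 0 ≤ p → 0 ≤ q → p + q = 2 →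
      (min z w) ^ 2 ≤ z ^ p * w ^ q := by
    intro p q hp hq hpq
    have h1 : (min z w) ^ 2 = (min z w) ^ p * (min z w) ^ q := by
      rw [← Real.rpow_add' hmin0 (by rw [hpq]; norm_num), hpq, Real.rpow_two]
    rw [h1]
    exact mul_le_mul (Real.rpow_le_rpow hmin0 (min_le_left _ _) hp)
      (Real.rpow_le_rpow hmin0 (min_le_right _ _) hq)
      (Real.rpow_nonneg hmin0 q) (Real.rpow_nonneg h0z p)
  have hMsplit : M ^ (2 * β - 2) ≤ 2 ^ (2 * β - 2) * (A ^ (2 * β - 2) + B ^ (2 * β - 2)) := by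
    rw [hM_def]
    exact aux_add_rpow_le_two_rpow hA0 hB0 (by linarith)
  set P := (1 + A ^ (2 * β - γ)) * (1 + B ^ (2 * β - γ)) with hP_def
  have hterm1 : A ^ (2 * β - 2) * (min z w) ^ 2 ≤ P := by
    have e1 : z ^ (2 - γ) ≤ A ^ (2 - γ) := Real.rpow_le_rpow h0z hzA (by linarith)
    have e2 : w ^ γ ≤ B ^ γ := Real.rpow_le_rpow h0w hwB (by linarith)
    calc A ^ (2 * β - 2) * (min z w) ^ 2
        ≤ A ^ (2 * β - 2) * (z ^ (2 - γ) * w ^ γ) :=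
          mul_le_mul_of_nonneg_left (hminsplit (2 - γ) γ (by linarith) (by linarith) (by ring))
            (Real.rpow_nonneg hA0 _)
    _ ≤ A ^ (2 * β - 2) * (A ^ (2 - γ) * B ^ γ) :=
          mul_le_mul_of_nonneg_left
            (mul_le_mul e1 e2 (Real.rpow_nonneg h0w γ) (Real.rpow_nonneg hA0 _))
            (Real.rpow_nonneg hA0 _)
    _ = A ^ (2 * β - γ) * B ^ γ := by
          rw [← mul_assoc, ← Real.rpow_add' hA0 (by rw [show (2*β-2) + (2-γ) = 2*β-γ by ring]; exact ne_of_gt hbs0),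
            show (2*β-2) + (2-γ) = 2*β-γ by ring]
    _ ≤ P := by
          have h1 : B ^ γ ≤ 1 + B ^ (2 * β - γ) :=
            aux_rpow_le_one_add_rpow hB0 (by linarith) (by linarith)
          have h2 : 0 ≤ A ^ (2 * β - γ) := Real.rpow_nonneg hA0 _
          have h3 : 0 ≤ B ^ (2 * β - γ) := Real.rpow_nonneg hB0 _
          rw [hP_def]
          calc A ^ (2 * β - γ) * B ^ γ ≤ A ^ (2 * β - γ) * (1 + B ^ (2 * β - γ)) :=
                mul_le_mul_of_nonneg_left h1 h2
          _ ≤ (1 + A ^ (2 * β - γ)) * (1 + B ^ (2 * β - γ)) :=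
                mul_le_mul_of_nonneg_right (by linarith) (by linarith)
  have hterm2 : B ^ (2 * β - 2) * (min z w) ^ 2 ≤ P := by
    have e1 : z ^ γ ≤ A ^ γ := Real.rpow_le_rpow h0z hzA (by linarith)
    have e2 : w ^ (2 - γ) ≤ B ^ (2 - γ) := Real.rpow_le_rpow h0w hwB (by linarith)
    calc B ^ (2 * β - 2) * (min z w) ^ 2
        ≤ B ^ (2 * β - 2) * (z ^ γ * w ^ (2 - γ)) :=
          mul_le_mul_of_nonneg_left (hminsplit γ (2 - γ) (by linarith) (by linarith) (by ring))
            (Real.rpow_nonneg hB0 _)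
    _ ≤ B ^ (2 * β - 2) * (A ^ γ * B ^ (2 - γ)) :=
          mul_le_mul_of_nonneg_left
            (mul_le_mul e1 e2 (Real.rpow_nonneg h0w _) (Real.rpow_nonneg hA0 _))
            (Real.rpow_nonneg hB0 _)
    _ = A ^ γ * (B ^ (2 * β - 2) * B ^ (2 - γ)) := by ring
    _ = A ^ γ * B ^ (2 * β - γ) := by
          rw [← Real.rpow_add' hB0 (by rw [show (2*β-2) + (2-γ) = 2*β-γ by ring]; exact ne_of_gt hbs0),
            show (2*β-2) + (2-γ) = 2*β-γ by ring]
    _ ≤ P := by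
          have h1 : A ^ γ ≤ 1 + A ^ (2 * β - γ) :=
            aux_rpow_le_one_add_rpow hA0 (by linarith) (by linarith)
          have h2 : 0 ≤ A ^ (2 * β - γ) := Real.rpow_nonneg hA0 _
          have h3 : 0 ≤ B ^ (2 * β - γ) := Real.rpow_nonneg hB0 _
          rw [hP_def]
          calc A ^ γ * B ^ (2 * β - γ) ≤ (1 + A ^ (2 * β - γ)) * B ^ (2 * β - γ) :=
                mul_le_mul_of_nonneg_right h1 h3
          _ ≤ (1 + A ^ (2 * β - γ)) * (1 + B ^ (2 * β - γ)) :=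
                mul_le_mul_of_nonneg_left (by linarith) (by linarith)
  have h2p : (0:ℝ) ≤ 2 ^ (2 * β - 2) := Real.rpow_nonneg (by norm_num) _
  calc h ^ 2 ≤ 4 * K ^ 2 * (min z w) ^ 2 := hsq
  _ = 4 * β ^ 2 * (M ^ (2 * β - 2) * (min z w) ^ 2) := by rw [hK2]; ring
  _ ≤ 4 * β ^ 2 * ((2 ^ (2 * β - 2) * (A ^ (2 * β - 2) + B ^ (2 * β - 2))) * (min z w) ^ 2) := by
      exact mul_le_mul_of_nonneg_left (mul_le_mul_of_nonneg_right hMsplit (sq_nonneg _))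
        (by positivity)
  _ = 4 * β ^ 2 * 2 ^ (2 * β - 2) *
        (A ^ (2 * β - 2) * (min z w) ^ 2 + B ^ (2 * β - 2) * (min z w) ^ 2) := by ring
  _ ≤ 4 * β ^ 2 * 2 ^ (2 * β - 2) * (P + P) := by
      exact mul_le_mul_of_nonneg_left (add_le_add hterm1 hterm2) (by positivity)
  _ = 8 * β ^ 2 * 2 ^ (2 * β - 2) * P := by ring

end QuadBound

/-- The central pointwise estimate: the square of the alternating sum of `β`-th powers of the
distances around the 4-cycle is controlled by a product of functions of `(x0, x2)` and of
`(x1, x3)` with moments of order `β* = max β (2β - 2)`. -/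
lemma hhat_sq_bound {𝒳 : Type*} [MetricSpace 𝒳] (o : 𝒳) {β : ℝ} (hβ : 0 < β) :
    ∃ C : ℝ, 0 ≤ C ∧ ∀ x0 x1 x2 x3 : 𝒳,
      (dist x0 x1 ^ β - dist x1 x2 ^ β + dist x2 x3 ^ β - dist x3 x0 ^ β) ^ 2 ≤
        C * ((1 + (dist x0 o + dist x2 o) ^ max β (2 * β - 2)) *
          (1 + (dist x1 o + dist x3 o) ^ max β (2 * β - 2))) := by
  rcases le_total β 1 with hβ1 | hβ1
  · refine ⟨4, by norm_num, fun x0 x1 x2 x3 => ?_⟩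
    have hbs : max β (2 * β - 2) = β := max_eq_left (by linarith)
    rw [hbs]
    refine quad_bound_small hβ hβ1 dist_nonneg dist_nonneg dist_nonneg dist_nonneg
      dist_nonneg dist_nonneg (by positivity) (by positivity)
      ?_ ?_ ?_ ?_ (dist_triangle_right x0 x2 o) (dist_triangle_right x1 x3 o)
    · have := abs_dist_sub_le x0 x2 x1
      rwa [dist_comm x2 x1] at this
    · have := abs_dist_sub_le x2 x0 x3
      rwa [dist_comm x0 x3, dist_comm x2 x0] at this
    · have := abs_dist_sub_le x1 x3 x0
      rwa [dist_comm x1 x0] at this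
    · have := abs_dist_sub_le x1 x3 x2
      rwa [dist_comm x3 x2] at this
  · refine ⟨8 * β ^ 2 * 2 ^ (2 * β - 2), by positivity, fun x0 x1 x2 x3 => ?_⟩
    have hbs : max β (2 * β - 2) = 2 * β - min β 2 := by
      rcases le_total β 2 with h | h
      · rw [min_eq_left h, max_eq_left (by linarith)]; ring
      · rw [min_eq_right h, max_eq_right (by linarith)]
    rw [hbs]
    have hA := dist_nonneg (x := x0) (y := o)
    have hC := dist_nonneg (x := x2) (y := o)
    have hB := dist_nonneg (x := x1) (y := o)
    have hD := dist_nonneg (x := x3) (y := o)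
    refine quad_bound_big hβ1 dist_nonneg dist_nonneg dist_nonneg dist_nonneg
      dist_nonneg dist_nonneg (by positivity) (by positivity)
      ?_ ?_ ?_ ?_ (dist_triangle_right x0 x2 o) (dist_triangle_right x1 x3 o)
      ?_ ?_ ?_ ?_
    · have := abs_dist_sub_le x0 x2 x1
      rwa [dist_comm x2 x1] at this
    · have := abs_dist_sub_le x2 x0 x3
      rwa [dist_comm x0 x3, dist_comm x2 x0] at this
    · have := abs_dist_sub_le x1 x3 x0
      rwa [dist_comm x1 x0] at this
    · have := abs_dist_sub_le x1 x3 x2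
      rwa [dist_comm x3 x2] at this
    · have := dist_triangle_right x0 x1 o; linarith
    · have := dist_triangle_right x1 x2 o; linarith
    · have := dist_triangle_right x2 x3 o; linarith
    · have := dist_triangle_right x3 x0 o; linarith

/-- The conditional expectation of a square-integrable function is square-integrable. -/
lemma integrable_sq_condexp {α : Type*} {m m0 : MeasurableSpace α} (hm : m ≤ m0)
    {μ : Measure α} [IsFiniteMeasure μ] {f : α → ℝ} (hf : MemLp f 2 μ) :
    Integrable (fun x => (μ[f|m]) x ^ 2) μ := by
  have hfi : Integrable f μ := hf.integrable one_le_two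
  have hFf : (hf.toLp f : α → ℝ) =ᵐ[μ] f := hf.coeFn_toLp
  have hae : (condExpL2 ℝ ℝ hm (hf.toLp f) : α → ℝ) =ᵐ[μ] μ[f|m] := by
    refine ae_eq_condExp_of_forall_setIntegral_eq hm hfi
      (fun s hs hμs => integrableOn_condExpL2_of_measure_ne_top hm hμs.ne _)
      (fun s hs hμs => ?_) (aestronglyMeasurable_condExpL2 hm _)
    rw [integral_condExpL2_eq_of_fin_meas_real _ hs hμs.ne]
    exact setIntegral_congr_ae (hm s hs) (hFf.mono fun x hx _ => hx)
  have hmem : MemLp (μ[f|m]) 2 μ :=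
    (Lp.memLp ((condExpL2 ℝ ℝ hm (hf.toLp f) : α →₂[μ] ℝ))).ae_eq hae
  exact (memLp_two_iff_integrable_sq hmem.aestronglyMeasurable).mp hmem

/-- `ĥ_X := d(X₁,X₂)^β − d(X₂,X₃)^β + d(X₃,X₄)^β − d(X₄,X₁)^β`, built from four
(independent) copies `X 0, X 1, X 2, X 3` of a random variable. -/
def hHat (β : ℝ) {Ω 𝒳 : Type*} [MetricSpace 𝒳] (X : Fin 4 → Ω → 𝒳) (ω : Ω) : ℝ :=
  dist (X 0 ω) (X 1 ω) ^ β - dist (X 1 ω) (X 2 ω) ^ β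
    + dist (X 2 ω) (X 3 ω) ^ β - dist (X 3 ω) (X 0 ω) ^ β

/-- `t̃_X := E(ĥ_X | X₁, X₂)`, the conditional expectation of `ĥ_X` given the σ-algebra
generated by `(X₁, X₂)`. -/
def tTilde (β : ℝ) {Ω 𝒳 : Type*} [MetricSpace 𝒳] [MeasurableSpace 𝒳]
    {mΩ : MeasurableSpace Ω} (μ : Measure Ω) (X : Fin 4 → Ω → 𝒳) : Ω → ℝ :=
  μ[hHat β X | MeasurableSpace.comap (fun ω => (X 0 ω, X 1 ω)) inferInstance]

/-- Let `β > 0` and `β* := max(β, 2β−2)`. If `E‖X‖^{β*} < ∞`, then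
`ĥ_X` is square-integrable (in particular integrable, so `t̃_X` is defined) and `t̃_X`
is square-integrable: `E[ĥ_X²] < ∞` and `E[t̃_X²] < ∞`. -/
theorem stmt3 {Ω : Type*} [MeasurableSpace Ω] (μ : Measure Ω) [IsProbabilityMeasure μ]
    {𝒳 : Type*} [MetricSpace 𝒳] [TopologicalSpace.SeparableSpace 𝒳]
    [MeasurableSpace 𝒳] [BorelSpace 𝒳] (o : 𝒳)
    (β : ℝ) (hβ : 0 < β)
    (X : Ω → 𝒳) (Xs : Fin 4 → Ω → 𝒳)
    (hXm : Measurable X) (hXsm : ∀ i, Measurable (Xs i))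
    (hindep : iIndepFun Xs μ)
    (hid : ∀ i, IdentDistrib (Xs i) X μ μ)
    (hmom : Integrable (fun ω => dist (X ω) o ^ max β (2 * β - 2)) μ) :
    Integrable (fun ω => hHat β Xs ω ^ 2) μ ∧ Integrable (hHat β Xs) μ ∧
      Integrable (fun ω => tTilde β μ Xs ω ^ 2) μ := by
  haveI : SecondCountableTopology 𝒳 := UniformSpace.secondCountable_of_separable 𝒳
  have hbs0 : (0:ℝ) < max β (2 * β - 2) := lt_of_lt_of_le hβ (le_max_left _ _)
  set bs := max β (2 * β - 2) with hbs_def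
  -- measurability of `x ↦ dist x o ^ bs`
  have hrpow : Measurable fun x : ℝ => x ^ bs :=
    (Real.continuous_rpow_const hbs0.le).measurable
  have hu : Measurable fun x : 𝒳 => dist x o ^ bs :=
    hrpow.comp (measurable_id.dist measurable_const)
  -- each copy has integrable `bs` moment
  have hmomi : ∀ i, Integrable (fun ω => dist (Xs i ω) o ^ bs) μ := by
    intro i
    have h := ((hid i).comp hu).integrable_iff
    exact h.mpr hmom
  -- distance-to-basepoint random variables
  have hdXs : ∀ i, Measurable fun ω => dist (Xs i ω) o := fun i =>
    (hXsm i).dist measurable_const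
  -- the two independent factors
  set F : Ω → ℝ := fun ω => 1 + (dist (Xs 0 ω) o + dist (Xs 2 ω) o) ^ bs with hF_def
  set G : Ω → ℝ := fun ω => 1 + (dist (Xs 1 ω) o + dist (Xs 3 ω) o) ^ bs with hG_def
  have hFm : Measurable F := measurable_const.add (hrpow.comp ((hdXs 0).add (hdXs 2)))
  have hGm : Measurable G := measurable_const.add (hrpow.comp ((hdXs 1).add (hdXs 3)))
  have hFint : Integrable F μ := by
    have hbd : Integrable (fun ω => 1 + 2 ^ bs *
        (dist (Xs 0 ω) o ^ bs + dist (Xs 2 ω) o ^ bs)) μ := by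
      have h1 := (((hmomi 0).add (hmomi 2)).const_mul ((2:ℝ) ^ bs))
      have h2 := (integrable_const (1:ℝ) (μ := μ)).add h1
      exact h2.congr (Filter.Eventually.of_forall fun ω => by simp [Pi.add_apply])
    refine Integrable.mono' hbd hFm.aestronglyMeasurable
      (Filter.Eventually.of_forall fun ω => ?_)
    have h0 : (0:ℝ) ≤ (dist (Xs 0 ω) o + dist (Xs 2 ω) o) ^ bs :=
      Real.rpow_nonneg (by positivity) bs
    have hF0 : (0:ℝ) ≤ F ω := by
      show (0:ℝ) ≤ 1 + (dist (Xs 0 ω) o + dist (Xs 2 ω) o) ^ bs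
      linarith
    rw [Real.norm_eq_abs, abs_of_nonneg hF0]
    show 1 + (dist (Xs 0 ω) o + dist (Xs 2 ω) o) ^ bs ≤
      1 + 2 ^ bs * (dist (Xs 0 ω) o ^ bs + dist (Xs 2 ω) o ^ bs)
    have := aux_add_rpow_le_two_rpow (dist_nonneg (x := Xs 0 ω) (y := o))
      (dist_nonneg (x := Xs 2 ω) (y := o)) hbs0.le
    linarith
  have hGint : Integrable G μ := by
    have hbd : Integrable (fun ω => 1 + 2 ^ bs *
        (dist (Xs 1 ω) o ^ bs + dist (Xs 3 ω) o ^ bs)) μ := by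
      have h1 := (((hmomi 1).add (hmomi 3)).const_mul ((2:ℝ) ^ bs))
      have h2 := (integrable_const (1:ℝ) (μ := μ)).add h1
      exact h2.congr (Filter.Eventually.of_forall fun ω => by simp [Pi.add_apply])
    refine Integrable.mono' hbd hGm.aestronglyMeasurable
      (Filter.Eventually.of_forall fun ω => ?_)
    have h0 : (0:ℝ) ≤ (dist (Xs 1 ω) o + dist (Xs 3 ω) o) ^ bs :=
      Real.rpow_nonneg (by positivity) bs
    have hG0 : (0:ℝ) ≤ G ω := by
      show (0:ℝ) ≤ 1 + (dist (Xs 1 ω) o + dist (Xs 3 ω) o) ^ bs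
      linarith
    rw [Real.norm_eq_abs, abs_of_nonneg hG0]
    show 1 + (dist (Xs 1 ω) o + dist (Xs 3 ω) o) ^ bs ≤
      1 + 2 ^ bs * (dist (Xs 1 ω) o ^ bs + dist (Xs 3 ω) o ^ bs)
    have := aux_add_rpow_le_two_rpow (dist_nonneg (x := Xs 1 ω) (y := o))
      (dist_nonneg (x := Xs 3 ω) (y := o)) hbs0.le
    linarith
  -- independence of `F` and `G`
  have hpair : IndepFun (fun ω => (Xs 0 ω, Xs 2 ω)) (fun ω => (Xs 1 ω, Xs 3 ω)) μ :=
    hindep.indepFun_prodMk_prodMk hXsm 0 2 1 3 (by decide) (by decide) (by decide) (by decide)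
  have hφ : Measurable fun p : 𝒳 × 𝒳 => 1 + (dist p.1 o + dist p.2 o) ^ bs :=
    measurable_const.add (hrpow.comp ((measurable_fst.dist measurable_const).add
      (measurable_snd.dist measurable_const)))
  have hFG : IndepFun F G μ := hpair.comp hφ hφ
  have hFGint : Integrable (F * G) μ := hFG.integrable_mul hFint hGint
  -- measurability of hHat
  have hd : ∀ i j : Fin 4, Measurable fun ω => dist (Xs i ω) (Xs j ω) ^ β := fun i j =>
    (Real.continuous_rpow_const hβ.le).measurable.comp ((hXsm i).dist (hXsm j))
  have hhm : Measurable (hHat β Xs) := by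
    unfold hHat
    exact (((hd 0 1).sub (hd 1 2)).add (hd 2 3)).sub (hd 3 0)
  -- the key bound
  obtain ⟨C, hC0, hkey⟩ := hhat_sq_bound o hβ
  have hsq : Integrable (fun ω => hHat β Xs ω ^ 2) μ := by
    refine Integrable.mono' (hFGint.const_mul C) ((hhm.pow_const 2).aestronglyMeasurable)
      (Filter.Eventually.of_forall fun ω => ?_)
    rw [Real.norm_eq_abs, abs_of_nonneg (sq_nonneg _)]
    have := hkey (Xs 0 ω) (Xs 1 ω) (Xs 2 ω) (Xs 3 ω)
    simpa [hHat, hF_def, hG_def, hbs_def] using this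
  have hint : Integrable (hHat β Xs) μ := by
    refine Integrable.mono' ((integrable_const 1).add hsq) hhm.aestronglyMeasurable
      (Filter.Eventually.of_forall fun ω => ?_)
    rw [Real.norm_eq_abs]
    show |hHat β Xs ω| ≤ 1 + hHat β Xs ω ^ 2
    nlinarith [sq_abs (hHat β Xs ω), sq_nonneg (|hHat β Xs ω| - 1), abs_nonneg (hHat β Xs ω)]
  have hm : MeasurableSpace.comap (fun ω => (Xs 0 ω, Xs 1 ω)) inferInstance ≤ _ :=
    ((hXsm 0).prodMk (hXsm 1)).comap_le
  have hmem : MemLp (hHat β Xs) 2 μ :=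
    (memLp_two_iff_integrable_sq hhm.aestronglyMeasurable).mpr hsq
  refine ⟨hsq, hint, ?_⟩
  have := integrable_sq_condexp hm hmem
  simpa [tTilde] using this
end
end

section
/- Let H₁ and H₂ be separable real Hilbert spaces, and let (X,Y) be a pair of random variables in H₁×H₂ with E‖X‖² < ∞ and E‖Y‖² < ∞, so that the Bochner expectations EX ∈ H₁ and EY ∈ H₂ exist. Then the following are equivalent: (i) E[⟨X₁−EX, X₂−EX⟩·⟨Y₁−EY, Y₂−EY⟩] = 0, i.e. the distance covariance DC₂(X,Y) with β = 2 vanishes; (ii) Cov(⟨X,x⟩, ⟨Y,y⟩) = 0 for every x ∈ H₁ and y ∈ H₂. -/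
open MeasureTheory ProbabilityTheory
open scoped RealInnerProductSpace ENNReal

set_option maxHeartbeats 1000000

noncomputable section


lemma hilbertBasis_countable_aux {E : Type*} [NormedAddCommGroup E] [InnerProductSpace ℝ E]
    [TopologicalSpace.SeparableSpace E] {ι : Type*} (b : HilbertBasis ι ℝ E) : Countable ι := by
  refine Pairwise.countable_of_isOpen_disjoint (s := fun i => Metric.ball (b i) (1/2))
    ?_ (fun i => Metric.isOpen_ball) (fun i => Metric.nonempty_ball.2 (by norm_num))
  intro i j hij
  refine Metric.ball_disjoint_ball ?_
  have h1 : ‖b i - b j‖ ^ 2 = 2 := by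
    rw [norm_sub_sq_real, b.orthonormal.1 i, b.orthonormal.1 j, b.orthonormal.2 hij]
    norm_num
  have h2 : (0:ℝ) ≤ ‖b i - b j‖ := norm_nonneg _
  have : (1:ℝ) ≤ ‖b i - b j‖ := by nlinarith
  rw [dist_eq_norm]
  linarith


/-- Let `H₁`, `H₂` be separable real Hilbert spaces and `(X,Y)` a
pair of random variables in `H₁×H₂` with `E‖X‖² < ∞`, `E‖Y‖² < ∞` (so the Bochner
expectations `EX`, `EY` exist). Then the following are equivalent:
(i) `E[⟪X₁−EX, X₂−EX⟫·⟪Y₁−EY, Y₂−EY⟫] = 0`, i.e. `DC₂(X,Y) = 0`;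
(ii) `Cov(⟪X,x⟫, ⟪Y,y⟫) = 0` for every `x ∈ H₁`, `y ∈ H₂`. -/
theorem stmt12 {Ω : Type*} [MeasurableSpace Ω] (μ : Measure Ω) [IsProbabilityMeasure μ]
    {H₁ H₂ : Type*}
    [NormedAddCommGroup H₁] [InnerProductSpace ℝ H₁] [CompleteSpace H₁]
    [SecondCountableTopology H₁] [MeasurableSpace H₁] [BorelSpace H₁]
    [NormedAddCommGroup H₂] [InnerProductSpace ℝ H₂] [CompleteSpace H₂]
    [SecondCountableTopology H₂] [MeasurableSpace H₂] [BorelSpace H₂]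
    (Z : Ω → H₁ × H₂) (Zs : Fin 2 → Ω → H₁ × H₂)
    (hZm : Measurable Z) (hZsm : ∀ i, Measurable (Zs i))
    (hindep : iIndepFun Zs μ)
    (hid : ∀ i, IdentDistrib (Zs i) Z μ μ)
    (hmomX : Integrable (fun ω => ‖(Z ω).1‖ ^ 2) μ)
    (hmomY : Integrable (fun ω => ‖(Z ω).2‖ ^ 2) μ) :
    (∫ ω, ⟪(Zs 0 ω).1 - ∫ ω', (Z ω').1 ∂μ, (Zs 1 ω).1 - ∫ ω', (Z ω').1 ∂μ⟫
        * ⟪(Zs 0 ω).2 - ∫ ω', (Z ω').2 ∂μ, (Zs 1 ω).2 - ∫ ω', (Z ω').2 ∂μ⟫ ∂μ = 0)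
      ↔ ∀ (x : H₁) (y : H₂),
          (∫ ω, ⟪(Z ω).1, x⟫ * ⟪(Z ω).2, y⟫ ∂μ)
            - (∫ ω, ⟪(Z ω).1, x⟫ ∂μ) * (∫ ω, ⟪(Z ω).2, y⟫ ∂μ) = 0 := by
  set m : H₁ := ∫ ω, (Z ω).1 ∂μ with hm
  set n : H₂ := ∫ ω, (Z ω).2 ∂μ with hn
  set U : Ω → H₁ := fun ω => (Z ω).1 - m with hU
  set V : Ω → H₂ := fun ω => (Z ω).2 - n with hV
  have hUm : Measurable U := hZm.fst.sub measurable_const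
  have hVm : Measurable V := hZm.snd.sub measurable_const
  -- integrability of X
  have hX1int : Integrable (fun ω => (Z ω).1) μ := by
    refine ((integrable_const (1:ℝ)).add hmomX).mono' hZm.fst.aestronglyMeasurable
      (Filter.Eventually.of_forall fun ω => ?_)
    simp only [Pi.add_apply]
    rcases le_or_gt ‖(Z ω).1‖ 1 with h | h
    · nlinarith [norm_nonneg (Z ω).1, sq_nonneg ‖(Z ω).1‖]
    · nlinarith
  have hY1int : Integrable (fun ω => (Z ω).2) μ := by
    refine ((integrable_const (1:ℝ)).add hmomY).mono' hZm.snd.aestronglyMeasurable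
      (Filter.Eventually.of_forall fun ω => ?_)
    simp only [Pi.add_apply]
    rcases le_or_gt ‖(Z ω).2‖ 1 with h | h
    · nlinarith [norm_nonneg (Z ω).2]
    · nlinarith
  have hU2 : Integrable (fun ω => ‖U ω‖ ^ 2) μ := by
    refine ((hmomX.const_mul 2).add (integrable_const (2 * ‖m‖ ^ 2))).mono'
      (hUm.norm.pow_const 2).aestronglyMeasurable (Filter.Eventually.of_forall fun ω => ?_)
    simp only [Pi.add_apply]
    have h1 : ‖U ω‖ ≤ ‖(Z ω).1‖ + ‖m‖ := norm_sub_le _ _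
    have h2 : (0:ℝ) ≤ ‖U ω‖ := norm_nonneg _
    have h3 : (0:ℝ) ≤ ‖(Z ω).1‖ := norm_nonneg _
    have h4 : (0:ℝ) ≤ ‖m‖ := norm_nonneg _
    rw [Real.norm_eq_abs, abs_of_nonneg (by positivity)]
    nlinarith [sq_nonneg (‖(Z ω).1‖ - ‖m‖), mul_le_mul h1 h1 h2 (by positivity : (0:ℝ) ≤ ‖(Z ω).1‖ + ‖m‖)]
  have hV2 : Integrable (fun ω => ‖V ω‖ ^ 2) μ := by
    refine ((hmomY.const_mul 2).add (integrable_const (2 * ‖n‖ ^ 2))).mono'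
      (hVm.norm.pow_const 2).aestronglyMeasurable (Filter.Eventually.of_forall fun ω => ?_)
    simp only [Pi.add_apply]
    have h1 : ‖V ω‖ ≤ ‖(Z ω).2‖ + ‖n‖ := norm_sub_le _ _
    have h2 : (0:ℝ) ≤ ‖V ω‖ := norm_nonneg _
    have h3 : (0:ℝ) ≤ ‖(Z ω).2‖ := norm_nonneg _
    have h4 : (0:ℝ) ≤ ‖n‖ := norm_nonneg _
    rw [Real.norm_eq_abs, abs_of_nonneg (by positivity)]
    nlinarith [sq_nonneg (‖(Z ω).2‖ - ‖n‖), mul_le_mul h1 h1 h2 (by positivity : (0:ℝ) ≤ ‖(Z ω).2‖ + ‖n‖)]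
  have hUV : Integrable (fun ω => ‖U ω‖ * ‖V ω‖) μ := by
    refine (hU2.add hV2).mono' (hUm.norm.mul hVm.norm).aestronglyMeasurable
      (Filter.Eventually.of_forall fun ω => ?_)
    simp only [Pi.add_apply]
    have h2 : (0:ℝ) ≤ ‖U ω‖ := norm_nonneg _
    have h4 : (0:ℝ) ≤ ‖V ω‖ := norm_nonneg _
    rw [Real.norm_eq_abs, abs_of_nonneg (by positivity)]
    nlinarith [sq_nonneg (‖U ω‖ - ‖V ω‖)]
  -- smul integrand integrable
  have hvint : ∀ x : H₁, Integrable (fun ω => ⟪U ω, x⟫ • V ω) μ := by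
    intro x
    refine (hUV.mul_const ‖x‖).mono'
      ((hUm.inner measurable_const).smul hVm).aestronglyMeasurable
      (Filter.Eventually.of_forall fun ω => ?_)
    rw [norm_smul]
    have := abs_real_inner_le_norm (U ω) x
    have h4 : (0:ℝ) ≤ ‖V ω‖ := norm_nonneg _
    rw [Real.norm_eq_abs]
    nlinarith [abs_nonneg ⟪U ω, x⟫]
  -- the cross-covariance operator
  set vL : H₁ →L[ℝ] H₂ := LinearMap.mkContinuous
    { toFun := fun x => ∫ ω, ⟪U ω, x⟫ • V ω ∂μ
      map_add' := by
        intro x y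
        simp_rw [inner_add_right, add_smul]
        exact integral_add (hvint x) (hvint y)
      map_smul' := by
        intro c x
        simp_rw [real_inner_smul_right, RingHom.id_apply, ← smul_smul]
        exact integral_smul c _ }
    (∫ ω, ‖U ω‖ * ‖V ω‖ ∂μ)
    (fun x => by
      simp only [LinearMap.coe_mk, AddHom.coe_mk]
      calc ‖∫ ω, ⟪U ω, x⟫ • V ω ∂μ‖ ≤ ∫ ω, ‖⟪U ω, x⟫ • V ω‖ ∂μ :=
            norm_integral_le_integral_norm _
        _ ≤ ∫ ω, (‖U ω‖ * ‖V ω‖) * ‖x‖ ∂μ := by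
            refine integral_mono ((hvint x).norm) (hUV.mul_const ‖x‖) fun ω => ?_
            rw [norm_smul, Real.norm_eq_abs]
            have := abs_real_inner_le_norm (U ω) x
            have h4 : (0:ℝ) ≤ ‖V ω‖ := norm_nonneg _
            nlinarith [abs_nonneg ⟪U ω, x⟫]
        _ = (∫ ω, ‖U ω‖ * ‖V ω‖ ∂μ) * ‖x‖ := integral_mul_const _ _)
    with hvL
  have hvL_apply : ∀ x : H₁, vL x = ∫ ω, ⟪U ω, x⟫ • V ω ∂μ := fun x => rfl
  have hv_inner : ∀ (x : H₁) (y : H₂), ⟪vL x, y⟫ = ∫ ω, ⟪U ω, x⟫ * ⟪V ω, y⟫ ∂μ := by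
    intro x y
    rw [real_inner_comm, hvL_apply, ← integral_inner (hvint x) y]
    congr 1; funext ω
    rw [real_inner_smul_right, real_inner_comm y (V ω)]
  -- covariance identity
  have hXY : Integrable (fun ω => ‖(Z ω).1‖ * ‖(Z ω).2‖) μ := by
    refine (hmomX.add hmomY).mono' (hZm.fst.norm.mul hZm.snd.norm).aestronglyMeasurable
      (Filter.Eventually.of_forall fun ω => ?_)
    simp only [Pi.add_apply]
    have h2 : (0:ℝ) ≤ ‖(Z ω).1‖ := norm_nonneg _
    have h4 : (0:ℝ) ≤ ‖(Z ω).2‖ := norm_nonneg _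
    rw [Real.norm_eq_abs, abs_of_nonneg (by positivity)]
    nlinarith [sq_nonneg (‖(Z ω).1‖ - ‖(Z ω).2‖)]
  have hcov : ∀ (x : H₁) (y : H₂),
      (∫ ω, ⟪(Z ω).1, x⟫ * ⟪(Z ω).2, y⟫ ∂μ)
        - (∫ ω, ⟪(Z ω).1, x⟫ ∂μ) * (∫ ω, ⟪(Z ω).2, y⟫ ∂μ) = ⟪vL x, y⟫ := by
    intro x y
    have hA : Integrable (fun ω => ⟪(Z ω).1, x⟫) μ := hX1int.inner_const x
    have hB : Integrable (fun ω => ⟪(Z ω).2, y⟫) μ := hY1int.inner_const y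
    have hAB : Integrable (fun ω => ⟪(Z ω).1, x⟫ * ⟪(Z ω).2, y⟫) μ := by
      refine ((hXY.mul_const ‖x‖).mul_const ‖y‖).mono'
        ((hZm.fst.inner measurable_const).mul (hZm.snd.inner measurable_const)).aestronglyMeasurable
        (Filter.Eventually.of_forall fun ω => ?_)
      rw [Real.norm_eq_abs, abs_mul]
      have h1 := abs_real_inner_le_norm (Z ω).1 x
      have h2 := abs_real_inner_le_norm (Z ω).2 y
      have h3 : (0:ℝ) ≤ |⟪(Z ω).1, x⟫| := abs_nonneg _
      have h4 : (0:ℝ) ≤ |⟪(Z ω).2, y⟫| := abs_nonneg _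
      have h5 : (0:ℝ) ≤ ‖(Z ω).2‖ := norm_nonneg _
      have h6 : (0:ℝ) ≤ ‖x‖ := norm_nonneg _
      calc |⟪(Z ω).1, x⟫| * |⟪(Z ω).2, y⟫| ≤ (‖(Z ω).1‖ * ‖x‖) * (‖(Z ω).2‖ * ‖y‖) :=
            mul_le_mul h1 h2 h4 (by positivity)
        _ = ‖(Z ω).1‖ * ‖(Z ω).2‖ * ‖x‖ * ‖y‖ := by ring
    have h1 : ∫ ω, ⟪(Z ω).1, x⟫ ∂μ = ⟪m, x⟫ := by
      rw [show (fun ω => ⟪(Z ω).1, x⟫) = fun ω => ⟪x, (Z ω).1⟫ by funext ω; rw [real_inner_comm]]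
      rw [integral_inner hX1int x, real_inner_comm]
    have h2 : ∫ ω, ⟪(Z ω).2, y⟫ ∂μ = ⟪n, y⟫ := by
      rw [show (fun ω => ⟪(Z ω).2, y⟫) = fun ω => ⟪y, (Z ω).2⟫ by funext ω; rw [real_inner_comm]]
      rw [integral_inner hY1int y, real_inner_comm]
    rw [hv_inner]
    have hexp : (fun ω => ⟪U ω, x⟫ * ⟪V ω, y⟫)
        = fun ω => (⟪(Z ω).1, x⟫ * ⟪(Z ω).2, y⟫ - ⟪m, x⟫ * ⟪(Z ω).2, y⟫)
            - (⟪n, y⟫ * ⟪(Z ω).1, x⟫ - ⟪m, x⟫ * ⟪n, y⟫) := by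
      funext ω
      simp only [hU, hV, inner_sub_left]
      ring
    have i1 : Integrable (fun ω => ⟪(Z ω).1, x⟫ * ⟪(Z ω).2, y⟫ - ⟪m, x⟫ * ⟪(Z ω).2, y⟫) μ :=
      hAB.sub (hB.const_mul _)
    have i2 : Integrable (fun ω => ⟪n, y⟫ * ⟪(Z ω).1, x⟫ - ⟪m, x⟫ * ⟪n, y⟫) μ :=
      (hA.const_mul _).sub (integrable_const _)
    rw [hexp, integral_sub i1 i2, integral_sub hAB (hB.const_mul _),
      integral_sub (hA.const_mul _) (integrable_const _),
      integral_const_mul, integral_const_mul, integral_const, h1, h2]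
    simp only [measure_univ, probReal_univ, ENNReal.toReal_one, smul_eq_mul, one_mul]
    ring
  -- Hilbert basis of H₁
  obtain ⟨w, b, hb⟩ := exists_hilbertBasis ℝ H₁
  haveI : Countable w := hilbertBasis_countable_aux b
  set g : w → Ω × Ω → ℝ :=
    fun i p => (⟪U p.1, b i⟫ * ⟪U p.2, b i⟫) * ⟪V p.1, V p.2⟫ with hg
  have hgsum : ∀ p : Ω × Ω, HasSum (fun i => g i p) (⟪U p.1, U p.2⟫ * ⟪V p.1, V p.2⟫) := by
    intro p
    have h := (b.hasSum_inner_mul_inner (U p.1) (U p.2)).mul_right (⟪V p.1, V p.2⟫)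
    have heq : (fun i : w => ⟪U p.1, b i⟫ * ⟪b i, U p.2⟫ * ⟪V p.1, V p.2⟫)
        = fun i : w => (⟪U p.1, b i⟫ * ⟪U p.2, b i⟫) * ⟪V p.1, V p.2⟫ := by
      funext i
      rw [real_inner_comm (b i) (U p.2)]
    rw [hg]
    exact heq ▸ h
  have hgm : ∀ i, AEStronglyMeasurable (g i) (μ.prod μ) := by
    intro i
    have hUm1 : Measurable fun p : Ω × Ω => U p.1 := hUm.comp measurable_fst
    have hUm2 : Measurable fun p : Ω × Ω => U p.2 := hUm.comp measurable_snd
    have hVm1 : Measurable fun p : Ω × Ω => V p.1 := hVm.comp measurable_fst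
    have hVm2 : Measurable fun p : Ω × Ω => V p.2 := hVm.comp measurable_snd
    exact (((hUm1.inner measurable_const).mul (hUm2.inner measurable_const)).mul
      (hVm1.inner hVm2)).aestronglyMeasurable
  have hprod : Integrable (fun p : Ω × Ω => (‖U p.1‖ * ‖V p.1‖) * (‖U p.2‖ * ‖V p.2‖))
      (μ.prod μ) := hUV.mul_prod hUV
  have hgbound : ∀ i, ∀ p : Ω × Ω, |g i p| ≤ (‖U p.1‖ * ‖V p.1‖) * (‖U p.2‖ * ‖V p.2‖) := by
    intro i p
    have e1 : ‖(b i : H₁)‖ = 1 := b.orthonormal.1 i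
    have h1 := abs_real_inner_le_norm (U p.1) (b i)
    have h2 := abs_real_inner_le_norm (U p.2) (b i)
    have h3 := abs_real_inner_le_norm (V p.1) (V p.2)
    rw [e1, mul_one] at h1 h2
    rw [hg]
    simp only []
    rw [abs_mul, abs_mul]
    have := mul_le_mul h1 h2 (abs_nonneg _) (norm_nonneg _)
    have h5 := mul_le_mul this h3 (abs_nonneg _) (by positivity)
    calc |⟪U p.1, b i⟫| * |⟪U p.2, b i⟫| * |⟪V p.1, V p.2⟫|
        ≤ ‖U p.1‖ * ‖U p.2‖ * (‖V p.1‖ * ‖V p.2‖) := h5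
      _ = (‖U p.1‖ * ‖V p.1‖) * (‖U p.2‖ * ‖V p.2‖) := by ring
  have hgint : ∀ i, Integrable (g i) (μ.prod μ) := by
    intro i
    refine hprod.mono' (hgm i) (Filter.Eventually.of_forall fun p => ?_)
    rw [Real.norm_eq_abs]
    exact hgbound i p
  have hgval : ∀ i, ∫ p, g i p ∂(μ.prod μ) = ‖vL (b i)‖ ^ 2 := by
    intro i
    rw [integral_prod _ (hgint i)]
    have inner_eq : ∀ ω : Ω, (∫ ω', g i (ω, ω') ∂μ) = ⟪U ω, b i⟫ * ⟪V ω, vL (b i)⟫ := by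
      intro ω
      have : ∀ ω', g i (ω, ω') = ⟪U ω, b i⟫ * ⟪V ω, ⟪U ω', b i⟫ • V ω'⟫ := by
        intro ω'
        rw [hg]
        simp only [real_inner_smul_right]
        ring
      simp_rw [this]
      rw [integral_const_mul, integral_inner (hvint (b i)) (V ω), hvL_apply]
    simp_rw [inner_eq]
    have := hv_inner (b i) (vL (b i))
    rw [← this, real_inner_self_eq_norm_sq]
  -- Parseval for U
  have hA : ∀ x : H₁, HasSum (fun i : w => ⟪x, b i⟫ ^ 2) (‖x‖ ^ 2) := by
    intro x
    have h := b.hasSum_inner_mul_inner x x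
    rw [real_inner_self_eq_norm_sq] at h
    have heq : (fun i : w => ⟪x, b i⟫ * ⟪b i, x⟫) = fun i : w => ⟪x, b i⟫ ^ 2 := by
      funext i
      rw [real_inner_comm (b i) x]
      ring
    exact heq ▸ h
  -- pointwise tsum bound
  have hbd : ∀ p : Ω × Ω, (∑' i, (‖g i p‖₊ : ℝ≥0∞))
      ≤ ENNReal.ofReal ((‖U p.1‖ * ‖V p.1‖) * (‖U p.2‖ * ‖V p.2‖)) := by
    intro p
    have key : ∀ s : Finset w,
        ∑ i ∈ s, |g i p| ≤ (‖U p.1‖ * ‖V p.1‖) * (‖U p.2‖ * ‖V p.2‖) := by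
      intro s
      have hCS2 := Finset.sum_mul_sq_le_sq_mul_sq s (fun i => |⟪U p.1, b i⟫|)
        (fun i => |⟪U p.2, b i⟫|)
      have hs1 : ∑ i ∈ s, |⟪U p.1, b i⟫| ^ 2 ≤ ‖U p.1‖ ^ 2 := by
        simp_rw [sq_abs]
        exact Summable.sum_le_tsum s (fun i _ => sq_nonneg _)
          (hA (U p.1)).summable |>.trans_eq (hA (U p.1)).tsum_eq
      have hs2 : ∑ i ∈ s, |⟪U p.2, b i⟫| ^ 2 ≤ ‖U p.2‖ ^ 2 := by
        simp_rw [sq_abs]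
        exact Summable.sum_le_tsum s (fun i _ => sq_nonneg _)
          (hA (U p.2)).summable |>.trans_eq (hA (U p.2)).tsum_eq
      have hsn : (0:ℝ) ≤ ∑ i ∈ s, |⟪U p.1, b i⟫| * |⟪U p.2, b i⟫| :=
        Finset.sum_nonneg fun i _ => mul_nonneg (abs_nonneg _) (abs_nonneg _)
      have hq1 : (0:ℝ) ≤ ∑ i ∈ s, |⟪U p.1, b i⟫| ^ 2 :=
        Finset.sum_nonneg fun i _ => sq_nonneg _
      have hq2 : (0:ℝ) ≤ ∑ i ∈ s, |⟪U p.2, b i⟫| ^ 2 :=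
        Finset.sum_nonneg fun i _ => sq_nonneg _
      have hCS : ∑ i ∈ s, |⟪U p.1, b i⟫| * |⟪U p.2, b i⟫| ≤ ‖U p.1‖ * ‖U p.2‖ := by
        have h6 : (∑ i ∈ s, |⟪U p.1, b i⟫| * |⟪U p.2, b i⟫|) ^ 2 ≤ (‖U p.1‖ * ‖U p.2‖) ^ 2 := by
          rw [mul_pow]
          exact hCS2.trans (mul_le_mul hs1 hs2 hq2 (sq_nonneg _))
        exact (abs_le_of_sq_le_sq' h6 (by positivity)).2
      calc ∑ i ∈ s, |g i p|
          ≤ ∑ i ∈ s, |⟪U p.1, b i⟫| * |⟪U p.2, b i⟫| * (‖V p.1‖ * ‖V p.2‖) := by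
            refine Finset.sum_le_sum fun i _ => ?_
            rw [hg]
            simp only []
            rw [abs_mul, abs_mul]
            exact mul_le_mul_of_nonneg_left
              ((abs_real_inner_le_norm (V p.1) (V p.2)))
              (mul_nonneg (abs_nonneg _) (abs_nonneg _)) |>.trans le_rfl
        _ = (∑ i ∈ s, |⟪U p.1, b i⟫| * |⟪U p.2, b i⟫|) * (‖V p.1‖ * ‖V p.2‖) := by
            rw [← Finset.sum_mul]
        _ ≤ (‖U p.1‖ * ‖U p.2‖) * (‖V p.1‖ * ‖V p.2‖) :=
            mul_le_mul_of_nonneg_right hCS (by positivity)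
        _ = (‖U p.1‖ * ‖V p.1‖) * (‖U p.2‖ * ‖V p.2‖) := by ring
    rw [ENNReal.tsum_eq_iSup_sum]
    refine iSup_le fun s => ?_
    have hsum_eq : ∑ i ∈ s, (‖g i p‖₊ : ℝ≥0∞) = ENNReal.ofReal (∑ i ∈ s, |g i p|) := by
      rw [ENNReal.ofReal_sum_of_nonneg (fun i _ => abs_nonneg _)]
      exact Finset.sum_congr rfl fun i _ => Real.enorm_eq_ofReal_abs _
    rw [hsum_eq]
    exact ENNReal.ofReal_le_ofReal (key s)
  -- finiteness
  have hfin : (∑' i, ∫⁻ p, ‖g i p‖₊ ∂(μ.prod μ)) ≠ ⊤ := by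
    rw [← lintegral_tsum (f := fun i p => (‖g i p‖₊ : ℝ≥0∞)) (fun i => (hgm i).enorm)]
    refine ne_top_of_le_ne_top hprod.2.ne (lintegral_mono fun p => (hbd p).trans ?_)
    rw [Real.enorm_eq_ofReal_abs, abs_of_nonneg (by positivity)]
  -- main identity
  have hmain : ∫ p, ⟪U p.1, U p.2⟫ * ⟪V p.1, V p.2⟫ ∂(μ.prod μ) = ∑' i, ‖vL (b i)‖ ^ 2 := by
    have h1 : (fun p : Ω × Ω => ⟪U p.1, U p.2⟫ * ⟪V p.1, V p.2⟫) = fun p => ∑' i, g i p :=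
      funext fun p => (hgsum p).tsum_eq.symm
    rw [h1, integral_tsum hgm hfin]
    exact tsum_congr hgval
  -- summability
  have hsummable : Summable (fun i : w => ‖vL (b i)‖ ^ 2) := by
    have h := ENNReal.summable_toReal hfin
    refine Summable.of_nonneg_of_le (fun i => sq_nonneg _) (fun i => ?_) h
    rw [← hgval i]
    have h2 := norm_integral_le_lintegral_norm (μ := μ.prod μ) (g i)
    simp_rw [ofReal_norm] at h2
    exact (le_abs_self _).trans ((Real.norm_eq_abs _).symm ▸ h2)
  -- pushforward to the product measure
  set F : (H₁ × H₂) × (H₁ × H₂) → ℝ :=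
    fun q => ⟪q.1.1 - m, q.2.1 - m⟫ * ⟪q.1.2 - n, q.2.2 - n⟫ with hF
  have hFc : Continuous F := by
    refine Continuous.mul ?_ ?_
    · exact (continuous_fst.fst.sub continuous_const).inner
        (continuous_snd.fst.sub continuous_const)
    · exact (continuous_fst.snd.sub continuous_const).inner
        (continuous_snd.snd.sub continuous_const)
  have hpairlaw : μ.map (fun ω => (Zs 0 ω, Zs 1 ω))
      = (μ.prod μ).map (fun p : Ω × Ω => (Z p.1, Z p.2)) := by
    rw [(indepFun_iff_map_prod_eq_prod_map_map (hZsm 0).aemeasurable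
        (hZsm 1).aemeasurable).mp (hindep.indepFun (show (0 : Fin 2) ≠ 1 by decide)),
      (hid 0).map_eq, (hid 1).map_eq, Measure.map_prod_map _ _ hZm hZm]
    rfl
  have hLHS : (∫ ω, ⟪(Zs 0 ω).1 - m, (Zs 1 ω).1 - m⟫
        * ⟪(Zs 0 ω).2 - n, (Zs 1 ω).2 - n⟫ ∂μ)
      = ∫ p, ⟪U p.1, U p.2⟫ * ⟪V p.1, V p.2⟫ ∂(μ.prod μ) := by
    have h1 : ∫ ω, F (Zs 0 ω, Zs 1 ω) ∂μ
        = ∫ q, F q ∂(μ.map fun ω => (Zs 0 ω, Zs 1 ω)) :=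
      (integral_map ((hZsm 0).prodMk (hZsm 1)).aemeasurable
        hFc.aestronglyMeasurable).symm
    have h2 : ∫ q, F q ∂((μ.prod μ).map fun p : Ω × Ω => (Z p.1, Z p.2))
        = ∫ p, F (Z p.1, Z p.2) ∂(μ.prod μ) :=
      integral_map ((hZm.comp measurable_fst).prodMk
        (hZm.comp measurable_snd)).aemeasurable hFc.aestronglyMeasurable
    calc ∫ ω, ⟪(Zs 0 ω).1 - m, (Zs 1 ω).1 - m⟫
            * ⟪(Zs 0 ω).2 - n, (Zs 1 ω).2 - n⟫ ∂μ
        = ∫ ω, F (Zs 0 ω, Zs 1 ω) ∂μ := rfl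
      _ = ∫ q, F q ∂(μ.map fun ω => (Zs 0 ω, Zs 1 ω)) := h1
      _ = ∫ q, F q ∂((μ.prod μ).map fun p : Ω × Ω => (Z p.1, Z p.2)) := by rw [hpairlaw]
      _ = ∫ p, F (Z p.1, Z p.2) ∂(μ.prod μ) := h2
      _ = ∫ p, ⟪U p.1, U p.2⟫ * ⟪V p.1, V p.2⟫ ∂(μ.prod μ) := rfl
  -- conclusion
  constructor
  · intro h x y
    rw [hcov x y]
    have h0 : ∑' i, ‖vL (b i)‖ ^ 2 = 0 := by rw [← hmain, ← hLHS]; exact h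
    have hz : ∀ i : w, vL (b i) = 0 := by
      intro i
      have hle := Summable.le_tsum hsummable i (fun j _ => sq_nonneg _)
      rw [h0] at hle
      have h1 : ‖vL (b i)‖ ^ 2 = 0 := le_antisymm hle (sq_nonneg _)
      have h2 : ‖vL (b i)‖ = 0 := by
        nlinarith [norm_nonneg (vL (b i))]
      exact norm_eq_zero.mp h2
    have hker_le : Submodule.span ℝ w ≤ LinearMap.ker (vL : H₁ →ₗ[ℝ] H₂) := by
      rw [Submodule.span_le]
      intro z hz'
      have hbz : b ⟨z, hz'⟩ = z := by rw [hb]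
      have : vL z = 0 := by rw [← hbz]; exact hz ⟨z, hz'⟩
      simpa [LinearMap.mem_ker] using this
    have hspan : (Submodule.span ℝ w).topologicalClosure = ⊤ := by
      have hds := b.dense_span
      rwa [hb, Subtype.range_coe] at hds
    have hclose : (Submodule.span ℝ w).topologicalClosure ≤ LinearMap.ker (vL : H₁ →ₗ[ℝ] H₂) :=
      (Submodule.span ℝ w).topologicalClosure_minimal hker_le (ContinuousLinearMap.isClosed_ker vL)
    rw [hspan] at hclose
    have : vL x = 0 := LinearMap.mem_ker.mp (hclose Submodule.mem_top)
    rw [this, inner_zero_left]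
  · intro h
    rw [hLHS, hmain]
    have hz : ∀ i : w, ‖vL (b i)‖ ^ 2 = 0 := by
      intro i
      have h1 := h (b i) (vL (b i))
      rw [hcov (b i) (vL (b i))] at h1
      rw [← real_inner_self_eq_norm_sq]
      exact h1
    simp only [hz]
    exact tsum_zero
end
end

section
/- Let β > 0. Suppose that X and Y are non-degenerate (neither is almost surely equal to a single point), and that at least one of E‖X‖^β, E‖Y‖^β, E[‖X‖^β·‖Y‖^β] is infinite. Then E[d(X₁,X₂)^β d(Y₁,Y₃)^β] = ∞ and also E[d(X₁,X₂)^β d(Y₁,Y₂)^β] + E[d(X₁,X₂)^β]·E[d(Y₁,Y₂)^β] = ∞ (where expectations of nonnegative variables are taken in [0,∞], with the convention 0·∞ = 0 in the product); in other words, the defining expression E[d(X₁,X₂)^β d(Y₁,Y₂)^β] + E[d(X₁,X₂)^β]·E[d(Y₁,Y₂)^β] − 2·E[d(X₁,X₂)^β d(Y₁,Y₃)^β] is of the meaningless form ∞ − ∞. -/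
open MeasureTheory ProbabilityTheory
open scoped ENNReal

noncomputable section

lemma aux_sep {Ω E : Type*} [MeasurableSpace Ω] (μ : Measure Ω) [IsProbabilityMeasure μ]
    [MetricSpace E] [MeasurableSpace E] [BorelSpace E] [TopologicalSpace.SeparableSpace E]
    {W : Ω → E} (hnd : ∀ x : E, ¬ (∀ᵐ ω ∂μ, W ω = x)) :
    ∃ (A B : Set E) (ε : ℝ), 0 < ε ∧ MeasurableSet A ∧ MeasurableSet B ∧
      0 < μ (W ⁻¹' A) ∧ 0 < μ (W ⁻¹' B) ∧
      (∀ a ∈ A, ∀ b ∈ B, ε ≤ dist a b) ∧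
      (∀ x : E, (∀ a ∈ A, ε ≤ dist x a) ∨ (∀ b ∈ B, ε ≤ dist x b)) := by
  haveI : Nonempty E := by
    by_contra h
    rw [not_nonempty_iff] at h
    haveI : IsEmpty Ω := ⟨fun ω => h.false (W ω)⟩
    have h1 : μ Set.univ = 1 := measure_univ
    rw [Set.eq_empty_of_isEmpty (Set.univ : Set Ω), measure_empty] at h1
    exact zero_ne_one h1
  haveI : SecondCountableTopology E := UniformSpace.secondCountable_of_separable E
  have h : ∀ b : E, ∃ᵐ ω ∂μ, W ω ≠ b := fun b => Filter.not_eventually.mp (hnd b)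
  obtain ⟨a, b, hab, ha, hb⟩ := exists_ne_forall_mem_nhds_pos_measure_preimage h
  have hd0 : 0 < dist a b := dist_pos.2 hab
  refine ⟨Metric.closedBall a (dist a b / 8), Metric.closedBall b (dist a b / 8), dist a b / 8,
    by positivity, measurableSet_closedBall, measurableSet_closedBall,
    ha _ (Metric.closedBall_mem_nhds a (by positivity)), hb _ (Metric.closedBall_mem_nhds b (by positivity)),
    ?_, ?_⟩
  · intro a' ha' b' hb'
    rw [Metric.mem_closedBall] at ha' hb'
    have := dist_triangle4 a a' b' b
    have h1 : dist a a' = dist a' a := dist_comm _ _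
    linarith
  · intro x
    by_cases hx : dist x a ≤ dist a b / 2
    · right
      intro b' hb'
      rw [Metric.mem_closedBall] at hb'
      have := dist_triangle4 a x b' b
      have h2 : dist a x = dist x a := dist_comm _ _
      linarith
    · left
      intro a' ha'
      rw [Metric.mem_closedBall] at ha'
      have := dist_triangle x a' a
      linarith

lemma fubini3 {α : Type*} [MeasurableSpace α] (ρ : Measure α) [SFinite ρ]
    (f g : α → α → ℝ≥0∞) (hf : Measurable (Function.uncurry f))
    (hg : Measurable (Function.uncurry g)) :
    ∫⁻ t : α × α × α, f t.1 t.2.1 * g t.1 t.2.2 ∂(ρ.prod (ρ.prod ρ))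
      = ∫⁻ p, (∫⁻ q, f p q ∂ρ) * (∫⁻ q, g p q ∂ρ) ∂ρ := by
  have hm : Measurable fun t : α × α × α => f t.1 t.2.1 * g t.1 t.2.2 :=
    (hf.comp (measurable_fst.prodMk (measurable_fst.comp measurable_snd))).mul
      (hg.comp (measurable_fst.prodMk (measurable_snd.comp measurable_snd)))
  rw [lintegral_prod _ hm.aemeasurable]
  refine lintegral_congr fun p => ?_
  exact lintegral_prod_mul (hf.comp measurable_prodMk_left).aemeasurable
    (hg.comp measurable_prodMk_left).aemeasurable


set_option maxHeartbeats 1000000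

/-- Let `β > 0`. Suppose `X` and `Y` are non-degenerate, and at least
one of `E‖X‖^β`, `E‖Y‖^β`, `E[‖X‖^β‖Y‖^β]` is infinite. Then
`E[d(X₁,X₂)^β d(Y₁,Y₃)^β] = ∞` and also
`E[d(X₁,X₂)^β d(Y₁,Y₂)^β] + E[d(X₁,X₂)^β]·E[d(Y₁,Y₂)^β] = ∞` (expectations of
nonnegative variables taken in `[0,∞]`); so the defining expression of the distance
covariance is of the meaningless form `∞ − ∞`. -/
theorem stmt14 {Ω : Type*} [MeasurableSpace Ω] (μ : Measure Ω) [IsProbabilityMeasure μ]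
    {𝒳 𝒴 : Type*} [MetricSpace 𝒳] [TopologicalSpace.SeparableSpace 𝒳]
    [MeasurableSpace 𝒳] [BorelSpace 𝒳]
    [MetricSpace 𝒴] [TopologicalSpace.SeparableSpace 𝒴]
    [MeasurableSpace 𝒴] [BorelSpace 𝒴]
    (o𝒳 : 𝒳) (o𝒴 : 𝒴) (β : ℝ) (hβ : 0 < β)
    (Z : Ω → 𝒳 × 𝒴) (Zs : Fin 3 → Ω → 𝒳 × 𝒴)
    (hZm : Measurable Z) (hZsm : ∀ i, Measurable (Zs i))
    (hindep : iIndepFun Zs μ)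
    (hid : ∀ i, IdentDistrib (Zs i) Z μ μ)
    -- `X` and `Y` are non-degenerate:
    (hXnd : ∀ x : 𝒳, ¬ (∀ᵐ ω ∂μ, (Z ω).1 = x))
    (hYnd : ∀ y : 𝒴, ¬ (∀ᵐ ω ∂μ, (Z ω).2 = y))
    -- at least one of the three moments is infinite:
    (hmom : (∫⁻ ω, ENNReal.ofReal (dist (Z ω).1 o𝒳 ^ β) ∂μ = ∞) ∨
      (∫⁻ ω, ENNReal.ofReal (dist (Z ω).2 o𝒴 ^ β) ∂μ = ∞) ∨
      (∫⁻ ω, ENNReal.ofReal (dist (Z ω).1 o𝒳 ^ β * dist (Z ω).2 o𝒴 ^ β) ∂μ = ∞)) :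
    (∫⁻ ω, ENNReal.ofReal (dist (Zs 0 ω).1 (Zs 1 ω).1 ^ β
        * dist (Zs 0 ω).2 (Zs 2 ω).2 ^ β) ∂μ = ∞) ∧
    (∫⁻ ω, ENNReal.ofReal (dist (Zs 0 ω).1 (Zs 1 ω).1 ^ β
          * dist (Zs 0 ω).2 (Zs 1 ω).2 ^ β) ∂μ)
        + (∫⁻ ω, ENNReal.ofReal (dist (Zs 0 ω).1 (Zs 1 ω).1 ^ β) ∂μ)
          * (∫⁻ ω, ENNReal.ofReal (dist (Zs 0 ω).2 (Zs 1 ω).2 ^ β) ∂μ) = ∞ := by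
  classical
  haveI : SecondCountableTopology 𝒳 := UniformSpace.secondCountable_of_separable 𝒳
  haveI : SecondCountableTopology 𝒴 := UniformSpace.secondCountable_of_separable 𝒴
  have hβ' : (0:ℝ) ≤ β := hβ.le
  set ν : Measure (𝒳 × 𝒴) := μ.map Z with hνdef
  haveI hνP : IsProbabilityMeasure ν := Measure.isProbabilityMeasure_map hZm.aemeasurable
  -- measurability toolkit
  have mkerX : Measurable fun t : 𝒳 × 𝒳 => ENNReal.ofReal (dist t.1 t.2 ^ β) :=
    (continuous_dist.rpow_const fun _ => Or.inr hβ').measurable.ennreal_ofReal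
  have mkerY : Measurable fun t : 𝒴 × 𝒴 => ENNReal.ofReal (dist t.1 t.2 ^ β) :=
    (continuous_dist.rpow_const fun _ => Or.inr hβ').measurable.ennreal_ofReal
  have mFX : Measurable fun t : (𝒳 × 𝒴) × (𝒳 × 𝒴) => ENNReal.ofReal (dist t.1.1 t.2.1 ^ β) :=
    mkerX.comp ((measurable_fst.comp measurable_fst).prodMk (measurable_fst.comp measurable_snd))
  have mFY : Measurable fun t : (𝒳 × 𝒴) × (𝒳 × 𝒴) => ENNReal.ofReal (dist t.1.2 t.2.2 ^ β) :=
    mkerY.comp ((measurable_snd.comp measurable_fst).prodMk (measurable_snd.comp measurable_snd))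
  -- the averaged kernels
  set φ : 𝒳 → ℝ≥0∞ := fun x => ∫⁻ q, ENNReal.ofReal (dist x q.1 ^ β) ∂ν with hφdef
  set ψ : 𝒴 → ℝ≥0∞ := fun y => ∫⁻ q, ENNReal.ofReal (dist y q.2 ^ β) ∂ν with hψdef
  have mφ : Measurable φ := by
    rw [hφdef]
    exact Measurable.lintegral_prod_right
      (mkerX.comp (measurable_fst.prodMk (measurable_fst.comp measurable_snd)))
  have mψ : Measurable ψ := by
    rw [hψdef]
    exact Measurable.lintegral_prod_right
      (mkerY.comp (measurable_fst.prodMk (measurable_snd.comp measurable_snd)))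
  -- identification of the joint distributions
  have hmapi : ∀ i, μ.map (Zs i) = ν := fun i => (hid i).map_eq
  have hpair01map : μ.map (fun ω => (Zs 0 ω, Zs 1 ω)) = ν.prod ν := by
    rw [(indepFun_iff_map_prod_eq_prod_map_map (hZsm 0).aemeasurable
      (hZsm 1).aemeasurable).1 (hindep.indepFun (by decide)), hmapi 0, hmapi 1]
  have hpair12map : μ.map (fun ω => (Zs 1 ω, Zs 2 ω)) = ν.prod ν := by
    rw [(indepFun_iff_map_prod_eq_prod_map_map (hZsm 1).aemeasurable
      (hZsm 2).aemeasurable).1 (hindep.indepFun (by decide)), hmapi 1, hmapi 2]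
  have h0_12 : IndepFun (Zs 0) (fun ω => (Zs 1 ω, Zs 2 ω)) μ :=
    (hindep.indepFun_prodMk hZsm 1 2 0 (by decide) (by decide)).symm
  have htrip : μ.map (fun ω => (Zs 0 ω, (Zs 1 ω, Zs 2 ω))) = ν.prod (ν.prod ν) := by
    rw [(indepFun_iff_map_prod_eq_prod_map_map (hZsm 0).aemeasurable
      ((hZsm 1).prodMk (hZsm 2)).aemeasurable).1 h0_12, hmapi 0, hpair12map]
  -- rewriting the goal integrals over ν
  have hL13 : ∫⁻ ω, ENNReal.ofReal (dist (Zs 0 ω).1 (Zs 1 ω).1 ^ β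
        * dist (Zs 0 ω).2 (Zs 2 ω).2 ^ β) ∂μ = ∫⁻ p, φ p.1 * ψ p.2 ∂ν := by
    have hG : Measurable fun t : (𝒳 × 𝒴) × (𝒳 × 𝒴) × (𝒳 × 𝒴) =>
        ENNReal.ofReal (dist t.1.1 t.2.1.1 ^ β) * ENNReal.ofReal (dist t.1.2 t.2.2.2 ^ β) :=
      (mkerX.comp ((measurable_fst.comp measurable_fst).prodMk
          (measurable_fst.comp (measurable_fst.comp measurable_snd)))).mul
        (mkerY.comp ((measurable_snd.comp measurable_fst).prodMk
          (measurable_snd.comp (measurable_snd.comp measurable_snd))))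
    have e1 : ∫⁻ ω, ENNReal.ofReal (dist (Zs 0 ω).1 (Zs 1 ω).1 ^ β
          * dist (Zs 0 ω).2 (Zs 2 ω).2 ^ β) ∂μ
        = ∫⁻ t : (𝒳 × 𝒴) × (𝒳 × 𝒴) × (𝒳 × 𝒴),
            ENNReal.ofReal (dist t.1.1 t.2.1.1 ^ β) * ENNReal.ofReal (dist t.1.2 t.2.2.2 ^ β)
            ∂(μ.map (fun ω => (Zs 0 ω, (Zs 1 ω, Zs 2 ω)))) := by
      rw [lintegral_map hG ((hZsm 0).prodMk ((hZsm 1).prodMk (hZsm 2)))]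
      exact lintegral_congr fun ω => ENNReal.ofReal_mul (Real.rpow_nonneg dist_nonneg β)
    rw [e1, htrip]
    exact fubini3 ν (fun p q => ENNReal.ofReal (dist p.1 q.1 ^ β))
      (fun p q => ENNReal.ofReal (dist p.2 q.2 ^ β))
      (mkerX.comp ((measurable_fst.comp measurable_fst).prodMk
        (measurable_fst.comp measurable_snd)))
      (mkerY.comp ((measurable_snd.comp measurable_fst).prodMk
        (measurable_snd.comp measurable_snd)))
  have hL12 : ∫⁻ ω, ENNReal.ofReal (dist (Zs 0 ω).1 (Zs 1 ω).1 ^ β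
        * dist (Zs 0 ω).2 (Zs 1 ω).2 ^ β) ∂μ
      = ∫⁻ t : (𝒳 × 𝒴) × (𝒳 × 𝒴),
          ENNReal.ofReal (dist t.1.1 t.2.1 ^ β) * ENNReal.ofReal (dist t.1.2 t.2.2 ^ β)
          ∂(ν.prod ν) := by
    rw [← hpair01map, lintegral_map (show Measurable fun t : (𝒳 × 𝒴) × (𝒳 × 𝒴) => ENNReal.ofReal (dist t.1.1 t.2.1 ^ β) * ENNReal.ofReal (dist t.1.2 t.2.2 ^ β) from mFX.mul mFY) ((hZsm 0).prodMk (hZsm 1))]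
    exact lintegral_congr fun ω =>
      ENNReal.ofReal_mul (Real.rpow_nonneg dist_nonneg β)
  have hLX : ∫⁻ ω, ENNReal.ofReal (dist (Zs 0 ω).1 (Zs 1 ω).1 ^ β) ∂μ
      = ∫⁻ t : (𝒳 × 𝒴) × (𝒳 × 𝒴), ENNReal.ofReal (dist t.1.1 t.2.1 ^ β) ∂(ν.prod ν) := by
    rw [← hpair01map, lintegral_map mFX ((hZsm 0).prodMk (hZsm 1))]
  have hLY : ∫⁻ ω, ENNReal.ofReal (dist (Zs 0 ω).2 (Zs 1 ω).2 ^ β) ∂μ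
      = ∫⁻ t : (𝒳 × 𝒴) × (𝒳 × 𝒴), ENNReal.ofReal (dist t.1.2 t.2.2 ^ β) ∂(ν.prod ν) := by
    rw [← hpair01map, lintegral_map mFY ((hZsm 0).prodMk (hZsm 1))]
  -- rewriting the moment integrals over ν
  have mnX : Measurable fun p : 𝒳 × 𝒴 => ENNReal.ofReal (dist p.1 o𝒳 ^ β) :=
    ((continuous_fst.dist continuous_const).rpow_const fun _ =>
      Or.inr hβ').measurable.ennreal_ofReal
  have mnY : Measurable fun p : 𝒳 × 𝒴 => ENNReal.ofReal (dist p.2 o𝒴 ^ β) :=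
    ((continuous_snd.dist continuous_const).rpow_const fun _ =>
      Or.inr hβ').measurable.ennreal_ofReal
  have mnXY : Measurable fun p : 𝒳 × 𝒴 =>
      ENNReal.ofReal (dist p.1 o𝒳 ^ β * dist p.2 o𝒴 ^ β) :=
    (((continuous_fst.dist continuous_const).rpow_const fun _ => Or.inr hβ').mul
      ((continuous_snd.dist continuous_const).rpow_const fun _ =>
        Or.inr hβ')).measurable.ennreal_ofReal
  have hmomX : ∫⁻ ω, ENNReal.ofReal (dist (Z ω).1 o𝒳 ^ β) ∂μ
      = ∫⁻ p, ENNReal.ofReal (dist p.1 o𝒳 ^ β) ∂ν := (lintegral_map mnX hZm).symm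
  have hmomY : ∫⁻ ω, ENNReal.ofReal (dist (Z ω).2 o𝒴 ^ β) ∂μ
      = ∫⁻ p, ENNReal.ofReal (dist p.2 o𝒴 ^ β) ∂ν := (lintegral_map mnY hZm).symm
  have hmomXY : ∫⁻ ω, ENNReal.ofReal (dist (Z ω).1 o𝒳 ^ β * dist (Z ω).2 o𝒴 ^ β) ∂μ
      = ∫⁻ p, ENNReal.ofReal (dist p.1 o𝒳 ^ β * dist p.2 o𝒴 ^ β) ∂ν :=
    (lintegral_map mnXY hZm).symm
  -- separated sets coming from non-degeneracy
  obtain ⟨AX, BX, εX, hεX, hAXm, hBXm, hAXpos, hBXpos, hsepX, haltX⟩ :=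
    aux_sep μ (W := fun ω => (Z ω).1) hXnd
  obtain ⟨AY, BY, εY, hεY, hAYm, hBYm, hAYpos, hBYpos, hsepY, haltY⟩ :=
    aux_sep μ (W := fun ω => (Z ω).2) hYnd
  have hAXν : 0 < ν (Prod.fst ⁻¹' AX) := by
    rw [hνdef, Measure.map_apply hZm (hAXm.preimage measurable_fst)]; exact hAXpos
  have hBXν : 0 < ν (Prod.fst ⁻¹' BX) := by
    rw [hνdef, Measure.map_apply hZm (hBXm.preimage measurable_fst)]; exact hBXpos
  have hAYν : 0 < ν (Prod.snd ⁻¹' AY) := by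
    rw [hνdef, Measure.map_apply hZm (hAYm.preimage measurable_snd)]; exact hAYpos
  have hBYν : 0 < ν (Prod.snd ⁻¹' BY) := by
    rw [hνdef, Measure.map_apply hZm (hBYm.preimage measurable_snd)]; exact hBYpos
  -- a bounded region with positive mass
  obtain ⟨M, hK⟩ : ∃ M : ℕ, 0 < ν {p : 𝒳 × 𝒴 | dist p.1 o𝒳 ≤ M ∧ dist p.2 o𝒴 ≤ M} := by
    by_contra hcon
    push_neg at hcon
    have hnull : ∀ M : ℕ, ν {p : 𝒳 × 𝒴 | dist p.1 o𝒳 ≤ M ∧ dist p.2 o𝒴 ≤ M} = 0 :=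
      fun M => le_antisymm (hcon M) zero_le
    have hsub : (Set.univ : Set (𝒳 × 𝒴))
        ⊆ ⋃ M : ℕ, {p : 𝒳 × 𝒴 | dist p.1 o𝒳 ≤ M ∧ dist p.2 o𝒴 ≤ M} := by
      intro p _
      obtain ⟨M, hM⟩ := exists_nat_ge (max (dist p.1 o𝒳) (dist p.2 o𝒴))
      exact Set.mem_iUnion.2 ⟨M, (le_max_left _ _).trans hM, (le_max_right _ _).trans hM⟩
    have hcontr : (1:ℝ≥0∞) ≤ 0 := by
      calc (1:ℝ≥0∞) = ν Set.univ := measure_univ.symm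
        _ ≤ ν (⋃ M : ℕ, {p : 𝒳 × 𝒴 | dist p.1 o𝒳 ≤ M ∧ dist p.2 o𝒴 ≤ M}) :=
            measure_mono hsub
        _ = 0 := measure_iUnion_null hnull
    simp at hcontr
  set K : Set (𝒳 × 𝒴) := {p : 𝒳 × 𝒴 | dist p.1 o𝒳 ≤ M ∧ dist p.2 o𝒴 ≤ M} with hKdef
  -- truncated norm functions
  set A : 𝒳 → ℝ≥0∞ := fun x => ENNReal.ofReal (max (dist x o𝒳 - M) 0 ^ β) with hAdef
  set B : 𝒴 → ℝ≥0∞ := fun y => ENNReal.ofReal (max (dist y o𝒴 - M) 0 ^ β) with hBdef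
  have mA : Measurable A := by
    rw [hAdef]
    exact ((((continuous_id.dist continuous_const).sub continuous_const).max
      continuous_const).rpow_const fun _ => Or.inr hβ').measurable.ennreal_ofReal
  have mB : Measurable B := by
    rw [hBdef]
    exact ((((continuous_id.dist continuous_const).sub continuous_const).max
      continuous_const).rpow_const fun _ => Or.inr hβ').measurable.ennreal_ofReal
  have mAf : Measurable fun p : 𝒳 × 𝒴 => A p.1 := mA.comp measurable_fst
  have mBs : Measurable fun p : 𝒳 × 𝒴 => B p.2 := mB.comp measurable_snd
  have mABs : Measurable fun p : 𝒳 × 𝒴 => A p.1 * B p.2 := mAf.mul mBs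
  have mφf : Measurable fun p : 𝒳 × 𝒴 => φ p.1 := mφ.comp measurable_fst
  have mψs : Measurable fun p : 𝒳 × 𝒴 => ψ p.2 := mψ.comp measurable_snd
  have hAle : ∀ (x : 𝒳) (q : 𝒳 × 𝒴), q ∈ K → A x ≤ ENNReal.ofReal (dist x q.1 ^ β) := by
    intro x q hq
    refine ENNReal.ofReal_le_ofReal (Real.rpow_le_rpow (le_max_right _ _) ?_ hβ')
    refine max_le ?_ dist_nonneg
    have h1 : dist x o𝒳 ≤ dist x q.1 + dist q.1 o𝒳 := dist_triangle _ _ _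
    have h2 : dist q.1 o𝒳 ≤ (M:ℝ) := hq.1
    linarith
  have hBle : ∀ (y : 𝒴) (q : 𝒳 × 𝒴), q ∈ K → B y ≤ ENNReal.ofReal (dist y q.2 ^ β) := by
    intro y q hq
    refine ENNReal.ofReal_le_ofReal (Real.rpow_le_rpow (le_max_right _ _) ?_ hβ')
    refine max_le ?_ dist_nonneg
    have h1 : dist y o𝒴 ≤ dist y q.2 + dist q.2 o𝒴 := dist_triangle _ _ _
    have h2 : dist q.2 o𝒴 ≤ (M:ℝ) := hq.2
    linarith
  have hAφ : ∀ x : 𝒳, A x * ν K ≤ φ x := by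
    intro x
    calc A x * ν K = ∫⁻ _ in K, A x ∂ν := (setLIntegral_const K (A x)).symm
      _ ≤ ∫⁻ q in K, ENNReal.ofReal (dist x q.1 ^ β) ∂ν :=
          setLIntegral_mono (mkerX.comp (measurable_const.prodMk measurable_fst))
            (fun q hq => hAle x q hq)
      _ ≤ φ x := setLIntegral_le_lintegral _ _
  have hBψ : ∀ y : 𝒴, B y * ν K ≤ ψ y := by
    intro y
    calc B y * ν K = ∫⁻ _ in K, B y ∂ν := (setLIntegral_const K (B y)).symm
      _ ≤ ∫⁻ q in K, ENNReal.ofReal (dist y q.2 ^ β) ∂ν :=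
          setLIntegral_mono (mkerY.comp (measurable_const.prodMk measurable_snd))
            (fun q hq => hBle y q hq)
      _ ≤ ψ y := setLIntegral_le_lintegral _ _
  -- uniform positive lower bounds for φ and ψ
  set cX : ℝ≥0∞ := ENNReal.ofReal (εX ^ β)
    * min (ν (Prod.fst ⁻¹' AX)) (ν (Prod.fst ⁻¹' BX)) with hcXdef
  set cY : ℝ≥0∞ := ENNReal.ofReal (εY ^ β)
    * min (ν (Prod.snd ⁻¹' AY)) (ν (Prod.snd ⁻¹' BY)) with hcYdef
  have hcXpos : 0 < cX :=
    ENNReal.mul_pos (ENNReal.ofReal_pos.2 (Real.rpow_pos_of_pos hεX β)).ne'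
      (lt_min hAXν hBXν).ne'
  have hcYpos : 0 < cY :=
    ENNReal.mul_pos (ENNReal.ofReal_pos.2 (Real.rpow_pos_of_pos hεY β)).ne'
      (lt_min hAYν hBYν).ne'
  have hcXφ : ∀ x : 𝒳, cX ≤ φ x := by
    intro x
    rcases haltX x with h | h
    · calc cX ≤ ENNReal.ofReal (εX ^ β) * ν (Prod.fst ⁻¹' AX) :=
          mul_le_mul_right (min_le_left _ _) _
        _ = ∫⁻ _ in Prod.fst ⁻¹' AX, ENNReal.ofReal (εX ^ β) ∂ν :=
          (setLIntegral_const _ _).symm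
        _ ≤ ∫⁻ q in Prod.fst ⁻¹' AX, ENNReal.ofReal (dist x q.1 ^ β) ∂ν :=
          setLIntegral_mono (mkerX.comp (measurable_const.prodMk measurable_fst))
            (fun q hq => ENNReal.ofReal_le_ofReal
              (Real.rpow_le_rpow hεX.le (h q.1 hq) hβ'))
        _ ≤ φ x := setLIntegral_le_lintegral _ _
    · calc cX ≤ ENNReal.ofReal (εX ^ β) * ν (Prod.fst ⁻¹' BX) :=
          mul_le_mul_right (min_le_right _ _) _
        _ = ∫⁻ _ in Prod.fst ⁻¹' BX, ENNReal.ofReal (εX ^ β) ∂ν :=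
          (setLIntegral_const _ _).symm
        _ ≤ ∫⁻ q in Prod.fst ⁻¹' BX, ENNReal.ofReal (dist x q.1 ^ β) ∂ν :=
          setLIntegral_mono (mkerX.comp (measurable_const.prodMk measurable_fst))
            (fun q hq => ENNReal.ofReal_le_ofReal
              (Real.rpow_le_rpow hεX.le (h q.1 hq) hβ'))
        _ ≤ φ x := setLIntegral_le_lintegral _ _
  have hcYψ : ∀ y : 𝒴, cY ≤ ψ y := by
    intro y
    rcases haltY y with h | h
    · calc cY ≤ ENNReal.ofReal (εY ^ β) * ν (Prod.snd ⁻¹' AY) :=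
          mul_le_mul_right (min_le_left _ _) _
        _ = ∫⁻ _ in Prod.snd ⁻¹' AY, ENNReal.ofReal (εY ^ β) ∂ν :=
          (setLIntegral_const _ _).symm
        _ ≤ ∫⁻ q in Prod.snd ⁻¹' AY, ENNReal.ofReal (dist y q.2 ^ β) ∂ν :=
          setLIntegral_mono (mkerY.comp (measurable_const.prodMk measurable_snd))
            (fun q hq => ENNReal.ofReal_le_ofReal
              (Real.rpow_le_rpow hεY.le (h q.2 hq) hβ'))
        _ ≤ ψ y := setLIntegral_le_lintegral _ _
    · calc cY ≤ ENNReal.ofReal (εY ^ β) * ν (Prod.snd ⁻¹' BY) :=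
          mul_le_mul_right (min_le_right _ _) _
        _ = ∫⁻ _ in Prod.snd ⁻¹' BY, ENNReal.ofReal (εY ^ β) ∂ν :=
          (setLIntegral_const _ _).symm
        _ ≤ ∫⁻ q in Prod.snd ⁻¹' BY, ENNReal.ofReal (dist y q.2 ^ β) ∂ν :=
          setLIntegral_mono (mkerY.comp (measurable_const.prodMk measurable_snd))
            (fun q hq => ENNReal.ofReal_le_ofReal
              (Real.rpow_le_rpow hεY.le (h q.2 hq) hβ'))
        _ ≤ ψ y := setLIntegral_le_lintegral _ _
  -- comparison of the norm with the truncated norm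
  have hAbound : ∀ x : 𝒳, ENNReal.ofReal (dist x o𝒳 ^ β)
      ≤ ENNReal.ofReal (2 ^ β) * A x + ENNReal.ofReal ((2 * M) ^ β) := by
    intro x
    have hM0 : (0:ℝ) ≤ M := Nat.cast_nonneg M
    by_cases h : dist x o𝒳 ≤ 2 * M
    · exact le_trans (ENNReal.ofReal_le_ofReal (Real.rpow_le_rpow dist_nonneg h hβ'))
        (self_le_add_left _ _)
    · push_neg at h
      have h1 : dist x o𝒳 ≤ 2 * (dist x o𝒳 - M) := by linarith
      have h2 : max (dist x o𝒳 - (M:ℝ)) 0 = dist x o𝒳 - M := max_eq_left (by linarith)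
      calc ENNReal.ofReal (dist x o𝒳 ^ β)
          ≤ ENNReal.ofReal ((2 * (dist x o𝒳 - M)) ^ β) :=
            ENNReal.ofReal_le_ofReal (Real.rpow_le_rpow dist_nonneg h1 hβ')
        _ = ENNReal.ofReal (2 ^ β) * A x := by
            rw [Real.mul_rpow (by norm_num) (by linarith),
              ENNReal.ofReal_mul (Real.rpow_nonneg (by norm_num) β), hAdef]
            simp only []
            rw [h2]
        _ ≤ ENNReal.ofReal (2 ^ β) * A x + ENNReal.ofReal ((2 * M) ^ β) :=
            self_le_add_right _ _
  have hBbound : ∀ y : 𝒴, ENNReal.ofReal (dist y o𝒴 ^ β)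
      ≤ ENNReal.ofReal (2 ^ β) * B y + ENNReal.ofReal ((2 * M) ^ β) := by
    intro y
    have hM0 : (0:ℝ) ≤ M := Nat.cast_nonneg M
    by_cases h : dist y o𝒴 ≤ 2 * M
    · exact le_trans (ENNReal.ofReal_le_ofReal (Real.rpow_le_rpow dist_nonneg h hβ'))
        (self_le_add_left _ _)
    · push_neg at h
      have h1 : dist y o𝒴 ≤ 2 * (dist y o𝒴 - M) := by linarith
      have h2 : max (dist y o𝒴 - (M:ℝ)) 0 = dist y o𝒴 - M := max_eq_left (by linarith)
      calc ENNReal.ofReal (dist y o𝒴 ^ β)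
          ≤ ENNReal.ofReal ((2 * (dist y o𝒴 - M)) ^ β) :=
            ENNReal.ofReal_le_ofReal (Real.rpow_le_rpow dist_nonneg h1 hβ')
        _ = ENNReal.ofReal (2 ^ β) * B y := by
            rw [Real.mul_rpow (by norm_num) (by linarith),
              ENNReal.ofReal_mul (Real.rpow_nonneg (by norm_num) β), hBdef]
            simp only []
            rw [h2]
        _ ≤ ENNReal.ofReal (2 ^ β) * B y + ENNReal.ofReal ((2 * M) ^ β) :=
            self_le_add_right _ _
  -- divergence transfer
  have hAdiv : ∫⁻ p, ENNReal.ofReal (dist p.1 o𝒳 ^ β) ∂ν = ∞ → ∫⁻ p, A p.1 ∂ν = ∞ := by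
    intro h
    by_contra hfin
    have hb : ∫⁻ p, ENNReal.ofReal (dist p.1 o𝒳 ^ β) ∂ν
        ≤ ENNReal.ofReal (2 ^ β) * ∫⁻ p, A p.1 ∂ν + ENNReal.ofReal ((2 * M) ^ β) := by
      calc ∫⁻ p, ENNReal.ofReal (dist p.1 o𝒳 ^ β) ∂ν
          ≤ ∫⁻ p, (ENNReal.ofReal (2 ^ β) * A p.1 + ENNReal.ofReal ((2 * M) ^ β)) ∂ν :=
            lintegral_mono fun p => hAbound p.1
        _ = ENNReal.ofReal (2 ^ β) * ∫⁻ p, A p.1 ∂ν + ENNReal.ofReal ((2 * M) ^ β) := by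
            rw [lintegral_add_right _ measurable_const,
              lintegral_const_mul _ (mAf), lintegral_const,
              measure_univ, mul_one]
    rw [h] at hb
    exact (ENNReal.add_ne_top.2 ⟨ENNReal.mul_ne_top ENNReal.ofReal_ne_top hfin,
      ENNReal.ofReal_ne_top⟩) (top_le_iff.1 hb)
  have hBdiv : ∫⁻ p, ENNReal.ofReal (dist p.2 o𝒴 ^ β) ∂ν = ∞ → ∫⁻ p, B p.2 ∂ν = ∞ := by
    intro h
    by_contra hfin
    have hb : ∫⁻ p, ENNReal.ofReal (dist p.2 o𝒴 ^ β) ∂ν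
        ≤ ENNReal.ofReal (2 ^ β) * ∫⁻ p, B p.2 ∂ν + ENNReal.ofReal ((2 * M) ^ β) := by
      calc ∫⁻ p, ENNReal.ofReal (dist p.2 o𝒴 ^ β) ∂ν
          ≤ ∫⁻ p, (ENNReal.ofReal (2 ^ β) * B p.2 + ENNReal.ofReal ((2 * M) ^ β)) ∂ν :=
            lintegral_mono fun p => hBbound p.2
        _ = ENNReal.ofReal (2 ^ β) * ∫⁻ p, B p.2 ∂ν + ENNReal.ofReal ((2 * M) ^ β) := by
            rw [lintegral_add_right _ measurable_const,
              lintegral_const_mul _ (mBs), lintegral_const,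
              measure_univ, mul_one]
    rw [h] at hb
    exact (ENNReal.add_ne_top.2 ⟨ENNReal.mul_ne_top ENNReal.ofReal_ne_top hfin,
      ENNReal.ofReal_ne_top⟩) (top_le_iff.1 hb)
  have hABdiv : ∫⁻ p, ENNReal.ofReal (dist p.1 o𝒳 ^ β * dist p.2 o𝒴 ^ β) ∂ν = ∞ →
      ∫⁻ p, A p.1 ∂ν ≠ ∞ → ∫⁻ p, B p.2 ∂ν ≠ ∞ → ∫⁻ p, A p.1 * B p.2 ∂ν = ∞ := by
    intro h hA hB
    by_contra hAB
    have hpt : ∀ p : 𝒳 × 𝒴, ENNReal.ofReal (dist p.1 o𝒳 ^ β * dist p.2 o𝒴 ^ β)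
        ≤ ENNReal.ofReal (2 ^ β) * ENNReal.ofReal (2 ^ β) * (A p.1 * B p.2)
          + (ENNReal.ofReal (2 ^ β) * ENNReal.ofReal ((2 * M) ^ β) * A p.1
            + (ENNReal.ofReal ((2 * M) ^ β) * ENNReal.ofReal (2 ^ β) * B p.2
              + ENNReal.ofReal ((2 * M) ^ β) * ENNReal.ofReal ((2 * M) ^ β))) := by
      intro p
      rw [ENNReal.ofReal_mul (Real.rpow_nonneg dist_nonneg β)]
      refine le_trans (mul_le_mul' (hAbound p.1) (hBbound p.2)) (le_of_eq ?_)
      ring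
    have hsum : ∫⁻ p, (ENNReal.ofReal (2 ^ β) * ENNReal.ofReal (2 ^ β) * (A p.1 * B p.2)
          + (ENNReal.ofReal (2 ^ β) * ENNReal.ofReal ((2 * M) ^ β) * A p.1
            + (ENNReal.ofReal ((2 * M) ^ β) * ENNReal.ofReal (2 ^ β) * B p.2
              + ENNReal.ofReal ((2 * M) ^ β) * ENNReal.ofReal ((2 * M) ^ β)))) ∂ν
        = ENNReal.ofReal (2 ^ β) * ENNReal.ofReal (2 ^ β) * ∫⁻ p, A p.1 * B p.2 ∂ν
          + (ENNReal.ofReal (2 ^ β) * ENNReal.ofReal ((2 * M) ^ β) * ∫⁻ p, A p.1 ∂ν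
            + (ENNReal.ofReal ((2 * M) ^ β) * ENNReal.ofReal (2 ^ β) * ∫⁻ p, B p.2 ∂ν
              + ENNReal.ofReal ((2 * M) ^ β) * ENNReal.ofReal ((2 * M) ^ β))) := by
      rw [lintegral_add_left (mABs.const_mul _),
        lintegral_add_left ((mAf).const_mul _),
        lintegral_add_left ((mBs).const_mul _),
        lintegral_const_mul _ mABs,
        lintegral_const_mul _ (mAf),
        lintegral_const_mul _ (mBs),
        lintegral_const, measure_univ, mul_one]
    have hb := (lintegral_mono hpt).trans_eq hsum
    rw [h] at hb
    refine (ENNReal.add_ne_top.2 ⟨ENNReal.mul_ne_top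
        (ENNReal.mul_ne_top ENNReal.ofReal_ne_top ENNReal.ofReal_ne_top) hAB,
      ENNReal.add_ne_top.2 ⟨ENNReal.mul_ne_top
        (ENNReal.mul_ne_top ENNReal.ofReal_ne_top ENNReal.ofReal_ne_top) hA,
      ENNReal.add_ne_top.2 ⟨ENNReal.mul_ne_top
        (ENNReal.mul_ne_top ENNReal.ofReal_ne_top ENNReal.ofReal_ne_top) hB,
      ENNReal.mul_ne_top ENNReal.ofReal_ne_top ENNReal.ofReal_ne_top⟩⟩⟩)
      (top_le_iff.1 hb)
  -- the three-way divergence dichotomy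
  have hdiv : (∫⁻ p, A p.1 ∂ν = ∞) ∨ (∫⁻ p, B p.2 ∂ν = ∞)
      ∨ (∫⁻ p, A p.1 * B p.2 ∂ν = ∞) := by
    rcases hmom with h | h | h
    · exact Or.inl (hAdiv (hmomX.symm.trans h))
    · exact Or.inr (Or.inl (hBdiv (hmomY.symm.trans h)))
    · by_cases hA : ∫⁻ p, A p.1 ∂ν = ∞
      · exact Or.inl hA
      · by_cases hB : ∫⁻ p, B p.2 ∂ν = ∞
        · exact Or.inr (Or.inl hB)
        · exact Or.inr (Or.inr (hABdiv (hmomXY.symm.trans h) hA hB))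
  -- identities for the product integrals
  have hIX : ∫⁻ t : (𝒳 × 𝒴) × (𝒳 × 𝒴), ENNReal.ofReal (dist t.1.1 t.2.1 ^ β) ∂(ν.prod ν)
      = ∫⁻ p, φ p.1 ∂ν := by
    rw [lintegral_prod _ mFX.aemeasurable]
  have hIY : ∫⁻ t : (𝒳 × 𝒴) × (𝒳 × 𝒴), ENNReal.ofReal (dist t.1.2 t.2.2 ^ β) ∂(ν.prod ν)
      = ∫⁻ p, ψ p.2 ∂ν := by
    rw [lintegral_prod _ mFY.aemeasurable]
  have hI12ge : (∫⁻ p, A p.1 * B p.2 ∂ν) * ν K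
      ≤ ∫⁻ t : (𝒳 × 𝒴) × (𝒳 × 𝒴),
          ENNReal.ofReal (dist t.1.1 t.2.1 ^ β) * ENNReal.ofReal (dist t.1.2 t.2.2 ^ β)
          ∂(ν.prod ν) := by
    rw [lintegral_prod _ (show Measurable fun t : (𝒳 × 𝒴) × (𝒳 × 𝒴) => ENNReal.ofReal (dist t.1.1 t.2.1 ^ β) * ENNReal.ofReal (dist t.1.2 t.2.2 ^ β) from mFX.mul mFY).aemeasurable]
    have h1 : ∀ p : 𝒳 × 𝒴, A p.1 * B p.2 * ν K
        ≤ ∫⁻ q, ENNReal.ofReal (dist p.1 q.1 ^ β) * ENNReal.ofReal (dist p.2 q.2 ^ β) ∂ν := by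
      intro p
      calc A p.1 * B p.2 * ν K = ∫⁻ _ in K, A p.1 * B p.2 ∂ν := (setLIntegral_const _ _).symm
        _ ≤ ∫⁻ q in K, ENNReal.ofReal (dist p.1 q.1 ^ β)
              * ENNReal.ofReal (dist p.2 q.2 ^ β) ∂ν :=
            setLIntegral_mono ((mkerX.comp (measurable_const.prodMk measurable_fst)).mul
                (mkerY.comp (measurable_const.prodMk measurable_snd)))
              (fun q hq => mul_le_mul' (hAle p.1 q hq) (hBle p.2 q hq))
        _ ≤ ∫⁻ q, ENNReal.ofReal (dist p.1 q.1 ^ β)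
              * ENNReal.ofReal (dist p.2 q.2 ^ β) ∂ν := setLIntegral_le_lintegral _ _
    calc (∫⁻ p, A p.1 * B p.2 ∂ν) * ν K = ∫⁻ p, A p.1 * B p.2 * ν K ∂ν :=
        (lintegral_mul_const _ mABs).symm
      _ ≤ _ := lintegral_mono h1
  -- positivity of the marginal energies
  have hIXpos : 0 < ∫⁻ p, φ p.1 ∂ν := by
    refine lt_of_lt_of_le hcXpos ?_
    calc cX = ∫⁻ _, cX ∂ν := by rw [lintegral_const, measure_univ, mul_one]
      _ ≤ ∫⁻ p, φ p.1 ∂ν := lintegral_mono fun p => hcXφ p.1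
  have hIYpos : 0 < ∫⁻ p, ψ p.2 ∂ν := by
    refine lt_of_lt_of_le hcYpos ?_
    calc cY = ∫⁻ _, cY ∂ν := by rw [lintegral_const, measure_univ, mul_one]
      _ ≤ ∫⁻ p, ψ p.2 ∂ν := lintegral_mono fun p => hcYψ p.2
  -- final case analysis
  rcases hdiv with hA | hB | hAB
  · have hφtop : ∫⁻ p, φ p.1 ∂ν = ∞ := by
      have hle : (∫⁻ p, A p.1 ∂ν) * ν K ≤ ∫⁻ p, φ p.1 ∂ν :=
        le_trans (le_of_eq (lintegral_mul_const _ (mAf)).symm)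
          (lintegral_mono fun p => hAφ p.1)
      rw [hA, ENNReal.top_mul hK.ne'] at hle
      exact top_le_iff.1 hle
    constructor
    · rw [hL13]
      have hle : (∫⁻ p, φ p.1 ∂ν) * cY ≤ ∫⁻ p, φ p.1 * ψ p.2 ∂ν :=
        le_trans (le_of_eq (lintegral_mul_const _ (mφf)).symm)
          (lintegral_mono fun p => mul_le_mul_right (hcYψ p.2) _)
      rw [hφtop, ENNReal.top_mul hcYpos.ne'] at hle
      exact top_le_iff.1 hle
    · rw [hL12, hLX, hLY, hIX, hIY]
      refine ENNReal.add_eq_top.2 (Or.inr ?_)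
      rw [hφtop]
      exact ENNReal.top_mul hIYpos.ne'
  · have hψtop : ∫⁻ p, ψ p.2 ∂ν = ∞ := by
      have hle : (∫⁻ p, B p.2 ∂ν) * ν K ≤ ∫⁻ p, ψ p.2 ∂ν :=
        le_trans (le_of_eq (lintegral_mul_const _ (mBs)).symm)
          (lintegral_mono fun p => hBψ p.2)
      rw [hB, ENNReal.top_mul hK.ne'] at hle
      exact top_le_iff.1 hle
    constructor
    · rw [hL13]
      have hle : cX * ∫⁻ p, ψ p.2 ∂ν ≤ ∫⁻ p, φ p.1 * ψ p.2 ∂ν :=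
        le_trans (le_of_eq (lintegral_const_mul _ (mψs)).symm)
          (lintegral_mono fun p => mul_le_mul_left (hcXφ p.1) _)
      rw [hψtop, ENNReal.mul_top hcXpos.ne'] at hle
      exact top_le_iff.1 hle
    · rw [hL12, hLX, hLY, hIX, hIY]
      refine ENNReal.add_eq_top.2 (Or.inr ?_)
      rw [hψtop]
      exact ENNReal.mul_top hIXpos.ne'
  · constructor
    · rw [hL13]
      have hle : (∫⁻ p, A p.1 * B p.2 ∂ν) * (ν K * ν K) ≤ ∫⁻ p, φ p.1 * ψ p.2 ∂ν := by
        refine le_trans (le_of_eq (lintegral_mul_const _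
          mABs).symm)
          (lintegral_mono fun p => ?_)
        calc A p.1 * B p.2 * (ν K * ν K) = (A p.1 * ν K) * (B p.2 * ν K) := by ring
          _ ≤ φ p.1 * ψ p.2 := mul_le_mul' (hAφ p.1) (hBψ p.2)
      rw [hAB, ENNReal.top_mul (ENNReal.mul_pos hK.ne' hK.ne').ne'] at hle
      exact top_le_iff.1 hle
    · rw [hL12]
      refine ENNReal.add_eq_top.2 (Or.inl ?_)
      refine top_le_iff.1 ?_
      calc (⊤:ℝ≥0∞) = (∫⁻ p, A p.1 * B p.2 ∂ν) * ν K := by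
            rw [hAB, ENNReal.top_mul hK.ne']
        _ ≤ _ := hI12ge
end
end

section
/- Let 𝒳 be a separable metric space and let 0 < β ≤ 1. If ∫₀^∞ P(‖X‖ > x)² · x^{2β−1} dx < ∞, then E[ĥ_X²] < ∞, and hence the β-distance covariance hDC_β(X,X) := (1/4)·E[ĥ_X²] is finite. -/
open MeasureTheory ProbabilityTheory
open scoped ENNReal NNReal

noncomputable section

/-- Real subadditivity of `x ↦ x^p` for `0 ≤ p ≤ 1` on nonnegative reals. -/
lemma real_rpow_add_le_add_rpow {a b p : ℝ} (ha : 0 ≤ a) (hb : 0 ≤ b)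
    (hp : 0 ≤ p) (hp1 : p ≤ 1) : (a + b) ^ p ≤ a ^ p + b ^ p := by
  have h := NNReal.rpow_add_le_add_rpow (⟨a, ha⟩ : ℝ≥0) (⟨b, hb⟩ : ℝ≥0) hp hp1
  exact_mod_cast h

/-- If `x ≤ y + z` (nonnegative reals) then `x^β − y^β ≤ z^β` for `0 ≤ β ≤ 1`. -/
lemma rpow_sub_le_of_le_add {β x y z : ℝ} (hβ0 : 0 ≤ β) (hβ1 : β ≤ 1)
    (hx : 0 ≤ x) (hy : 0 ≤ y) (hz : 0 ≤ z) (h : x ≤ y + z) :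
    x ^ β - y ^ β ≤ z ^ β := by
  have h1 : x ^ β ≤ (y + z) ^ β := Real.rpow_le_rpow hx h hβ0
  have h2 := real_rpow_add_le_add_rpow hy hz hβ0 hβ1
  linarith

/-- Let `𝒳` be a separable metric space and `0 < β ≤ 1`. If
`∫₀^∞ P(‖X‖ > x)² x^{2β−1} dx < ∞`, then `E[ĥ_X²] < ∞`, hence
`hDC_β(X,X) = (1/4)E[ĥ_X²]` is finite. -/
theorem stmt15 {Ω : Type*} [MeasurableSpace Ω] (μ : Measure Ω) [IsProbabilityMeasure μ]
    {𝒳 : Type*} [MetricSpace 𝒳] [TopologicalSpace.SeparableSpace 𝒳]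
    [MeasurableSpace 𝒳] [BorelSpace 𝒳] (o : 𝒳)
    (β : ℝ) (hβ0 : 0 < β) (hβ1 : β ≤ 1)
    (X : Ω → 𝒳) (Xs : Fin 4 → Ω → 𝒳)
    (hXm : Measurable X) (hXsm : ∀ i, Measurable (Xs i))
    (hindep : iIndepFun Xs μ)
    (hid : ∀ i, IdentDistrib (Xs i) X μ μ)
    (htail : ∫⁻ x in Set.Ioi (0 : ℝ),
        (μ {ω | x < dist (X ω) o}) ^ 2 * ENNReal.ofReal (x ^ (2 * β - 1)) < ∞) :
    Integrable (fun ω => hHat β Xs ω ^ 2) μ := by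
  haveI : SecondCountableTopology 𝒳 := UniformSpace.secondCountable_of_separable 𝒳
  -- the minimum of the two "diagonal" distances
  set M : Ω → ℝ := fun ω => min (dist (Xs 0 ω) (Xs 2 ω)) (dist (Xs 1 ω) (Xs 3 ω)) with hMdef
  have hMm : Measurable M := ((hXsm 0).dist (hXsm 2)).min ((hXsm 1).dist (hXsm 3))
  have hMnn : ∀ ω, 0 ≤ M ω := fun ω => le_min dist_nonneg dist_nonneg
  -- pointwise bound |ĥ| ≤ 2 M^β
  have tri : ∀ a b c : 𝒳, dist a b ^ β - dist b c ^ β ≤ dist a c ^ β := by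
    intro a b c
    apply rpow_sub_le_of_le_add hβ0.le hβ1 dist_nonneg dist_nonneg dist_nonneg
    have h := dist_triangle a c b
    have h2 := dist_comm c b
    linarith
  have hbound : ∀ ω, |hHat β Xs ω| ≤ 2 * M ω ^ β := by
    intro ω
    have t1 := tri (Xs 0 ω) (Xs 1 ω) (Xs 2 ω)
    have t2 := tri (Xs 2 ω) (Xs 3 ω) (Xs 0 ω)
    have t3 := tri (Xs 1 ω) (Xs 2 ω) (Xs 0 ω)
    have t4 := tri (Xs 3 ω) (Xs 0 ω) (Xs 2 ω)
    have t5 := tri (Xs 0 ω) (Xs 1 ω) (Xs 3 ω)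
    have t6 := tri (Xs 2 ω) (Xs 3 ω) (Xs 1 ω)
    have t7 := tri (Xs 1 ω) (Xs 2 ω) (Xs 3 ω)
    have t8 := tri (Xs 3 ω) (Xs 0 ω) (Xs 1 ω)
    have c20 : dist (Xs 2 ω) (Xs 0 ω) = dist (Xs 0 ω) (Xs 2 ω) := dist_comm _ _
    have c21 : dist (Xs 2 ω) (Xs 1 ω) = dist (Xs 1 ω) (Xs 2 ω) := dist_comm _ _
    have c30 : dist (Xs 3 ω) (Xs 0 ω) = dist (Xs 0 ω) (Xs 3 ω) := dist_comm _ _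
    have c31 : dist (Xs 3 ω) (Xs 1 ω) = dist (Xs 1 ω) (Xs 3 ω) := dist_comm _ _
    have c32 : dist (Xs 3 ω) (Xs 2 ω) = dist (Xs 2 ω) (Xs 3 ω) := dist_comm _ _
    have c10 : dist (Xs 1 ω) (Xs 0 ω) = dist (Xs 0 ω) (Xs 1 ω) := dist_comm _ _
    rw [c20] at t2
    rw [c20, c10] at t3
    rw [c32] at t4
    rw [← c30] at t5
    rw [c31, c21] at t6
    rw [c31] at t8
    rcases le_total (dist (Xs 0 ω) (Xs 2 ω)) (dist (Xs 1 ω) (Xs 3 ω)) with h | h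
    · have hM : M ω = dist (Xs 0 ω) (Xs 2 ω) := min_eq_left h
      rw [hM, abs_le]
      constructor <;> [skip; skip] <;> simp only [hHat] <;> linarith
    · have hM : M ω = dist (Xs 1 ω) (Xs 3 ω) := min_eq_right h
      rw [hM, abs_le]
      constructor <;> [skip; skip] <;> simp only [hHat] <;> linarith
  -- tail function of ‖X‖
  set G : ℝ → ℝ≥0∞ := fun s => μ {ω | s < dist (X ω) o} with hGdef
  have hGanti : Antitone G := fun s t hst =>
    measure_mono (fun ω hω => lt_of_le_of_lt hst hω)
  have hGm : Measurable G := hGanti.measurable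
  -- identically distributed norms
  have hdistm : Measurable fun x : 𝒳 => dist x o := measurable_id.dist measurable_const
  have hidd : ∀ i s, μ {ω | s < dist (Xs i ω) o} = G s := by
    intro i s
    have h := ((hid i).comp hdistm).measure_mem_eq (measurableSet_Ioi (a := s))
    exact h
  -- independence of the two diagonal distances
  have hIndep : IndepFun (fun ω => dist (Xs 0 ω) (Xs 2 ω))
      (fun ω => dist (Xs 1 ω) (Xs 3 ω)) μ := by
    have hpair := hindep.indepFun_prodMk_prodMk hXsm 0 2 1 3
      (by decide) (by decide) (by decide) (by decide)
    exact hpair.comp measurable_dist measurable_dist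
  -- tail bound for M
  have hb : ∀ (i j : Fin 4) (t : ℝ),
      μ ((fun ω => dist (Xs i ω) (Xs j ω)) ⁻¹' Set.Ioi t) ≤ 2 * G (t / 2) := by
    intro i j t
    have hsub : (fun ω => dist (Xs i ω) (Xs j ω)) ⁻¹' Set.Ioi t ⊆
        {ω | t / 2 < dist (Xs i ω) o} ∪ {ω | t / 2 < dist (Xs j ω) o} := by
      intro ω hω
      by_contra hcon
      simp only [Set.mem_union, Set.mem_setOf_eq, not_or, not_lt] at hcon
      have htri := dist_triangle (Xs i ω) o (Xs j ω)
      have hco : dist o (Xs j ω) = dist (Xs j ω) o := dist_comm _ _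
      have hω' : t < dist (Xs i ω) (Xs j ω) := hω
      linarith [hcon.1, hcon.2]
    calc μ ((fun ω => dist (Xs i ω) (Xs j ω)) ⁻¹' Set.Ioi t)
        ≤ μ ({ω | t / 2 < dist (Xs i ω) o} ∪ {ω | t / 2 < dist (Xs j ω) o}) :=
          measure_mono hsub
      _ ≤ μ {ω | t / 2 < dist (Xs i ω) o} + μ {ω | t / 2 < dist (Xs j ω) o} :=
          measure_union_le _ _
      _ = 2 * G (t / 2) := by rw [hidd i, hidd j, two_mul]
  have htailM : ∀ t : ℝ, μ {ω | t < M ω} ≤ 4 * G (t / 2) ^ 2 := by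
    intro t
    have hsplit : {ω | t < M ω} =
        (fun ω => dist (Xs 0 ω) (Xs 2 ω)) ⁻¹' Set.Ioi t ∩
        (fun ω => dist (Xs 1 ω) (Xs 3 ω)) ⁻¹' Set.Ioi t := by
      ext ω
      simp [hMdef, lt_min_iff]
    have hmul : μ {ω | t < M ω} =
        μ ((fun ω => dist (Xs 0 ω) (Xs 2 ω)) ⁻¹' Set.Ioi t) *
        μ ((fun ω => dist (Xs 1 ω) (Xs 3 ω)) ⁻¹' Set.Ioi t) := by
      rw [hsplit]
      exact hIndep.measure_inter_preimage_eq_mul _ _ measurableSet_Ioi measurableSet_Ioi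
    rw [hmul]
    calc μ ((fun ω => dist (Xs 0 ω) (Xs 2 ω)) ⁻¹' Set.Ioi t) *
        μ ((fun ω => dist (Xs 1 ω) (Xs 3 ω)) ⁻¹' Set.Ioi t)
        ≤ (2 * G (t / 2)) * (2 * G (t / 2)) := mul_le_mul' (hb 0 2 t) (hb 1 3 t)
      _ = 4 * G (t / 2) ^ 2 := by ring
  -- the tail integral with argument t/2 is finite (change of variables t = 2u)
  set F : ℝ → ℝ≥0∞ := fun t => G t ^ 2 * ENNReal.ofReal (t ^ (2 * β - 1)) with hFdef
  have hFm : Measurable F := by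
    apply Measurable.mul
    · exact (hGm.pow_const 2)
    · exact ENNReal.measurable_ofReal.comp (measurable_id.pow_const _)
  have htailF : ∫⁻ t in Set.Ioi (0 : ℝ), F t < ∞ := htail
  have hhalf : ∫⁻ t in Set.Ioi (0 : ℝ), F (t / 2) < ∞ := by
    set H : ℝ → ℝ≥0∞ := (Set.Ioi (0 : ℝ)).indicator (fun t => F (t / 2)) with hHdef
    have hHm : Measurable H :=
      (hFm.comp (measurable_id.div_const 2)).indicator measurableSet_Ioi
    have step1 : ∫⁻ t in Set.Ioi (0 : ℝ), F (t / 2) = ∫⁻ t, H t := by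
      rw [hHdef, lintegral_indicator measurableSet_Ioi]
    have hmap : Measure.map (fun x : ℝ => 2 * x) volume
        = ENNReal.ofReal |(2 : ℝ)⁻¹| • volume := Real.map_volume_mul_left two_ne_zero
    have step2 : ∫⁻ u, H (2 * u) = ENNReal.ofReal |(2 : ℝ)⁻¹| * ∫⁻ t, H t := by
      rw [← lintegral_map hHm (measurable_const_mul 2), hmap, lintegral_smul_measure, smul_eq_mul]
    have hH2u : ∀ u : ℝ, H (2 * u) = (Set.Ioi (0 : ℝ)).indicator F u := by
      intro u
      by_cases hu : 0 < u
      · have h2u : (0 : ℝ) < 2 * u := by linarith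
        rw [hHdef]
        simp only [Set.indicator_of_mem (Set.mem_Ioi.mpr h2u),
          Set.indicator_of_mem (Set.mem_Ioi.mpr hu)]
        norm_num
      · have h2u : ¬ (0 : ℝ) < 2 * u := by push_neg at hu ⊢; linarith
        rw [hHdef]
        simp only [Set.indicator_of_notMem (fun hc => h2u (Set.mem_Ioi.mp hc)),
          Set.indicator_of_notMem (fun hc => hu (Set.mem_Ioi.mp hc))]
    have step3 : ∫⁻ u, H (2 * u) = ∫⁻ t in Set.Ioi (0 : ℝ), F t := by
      simp_rw [hH2u]
      rw [lintegral_indicator measurableSet_Ioi]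
    rw [step1]
    have hfin : ENNReal.ofReal |(2 : ℝ)⁻¹| * ∫⁻ t, H t < ∞ := by
      rw [← step2, step3]; exact htailF
    have hne : ENNReal.ofReal |(2 : ℝ)⁻¹| ≠ 0 := by
      simp [ENNReal.ofReal_eq_zero]
    exact ENNReal.lt_top_of_mul_ne_top_right hfin.ne hne
  -- layer cake: E[M^{2β}] < ∞
  have hp0 : (0 : ℝ) < 2 * β := by linarith
  have layer := lintegral_rpow_eq_lintegral_meas_lt_mul μ (f := M)
    (Filter.Eventually.of_forall hMnn) hMm.aemeasurable hp0
  have hfinM : ∫⁻ ω, ENNReal.ofReal (M ω ^ (2 * β)) ∂μ < ∞ := by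
    rw [layer]
    have hinner : ∫⁻ t in Set.Ioi (0 : ℝ),
        μ {a | t < M a} * ENNReal.ofReal (t ^ (2 * β - 1)) < ∞ := by
      have hle : ∫⁻ t in Set.Ioi (0 : ℝ),
          μ {a | t < M a} * ENNReal.ofReal (t ^ (2 * β - 1))
          ≤ ∫⁻ t in Set.Ioi (0 : ℝ),
            (4 * G (t / 2) ^ 2) * ENNReal.ofReal (t ^ (2 * β - 1)) :=
        lintegral_mono fun t => mul_le_mul_left (htailM t) _
      refine lt_of_le_of_lt hle ?_
      -- on Ioi 0, rewrite t^{2β-1} = 2^{2β-1} (t/2)^{2β-1}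
      have hcongr : ∫⁻ t in Set.Ioi (0 : ℝ),
          (4 * G (t / 2) ^ 2) * ENNReal.ofReal (t ^ (2 * β - 1))
          = ∫⁻ t in Set.Ioi (0 : ℝ),
            (4 * ENNReal.ofReal ((2 : ℝ) ^ (2 * β - 1))) * F (t / 2) := by
        refine setLIntegral_congr_fun measurableSet_Ioi ?_
        intro t ht
        have ht2 : (0 : ℝ) ≤ t / 2 := by
          have := Set.mem_Ioi.mp ht; linarith
        have hts : t = 2 * (t / 2) := by ring
        have hpow : t ^ (2 * β - 1) = (2 : ℝ) ^ (2 * β - 1) * (t / 2) ^ (2 * β - 1) := by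
          rw [hts, Real.mul_rpow (by norm_num) ht2]
          ring_nf
        beta_reduce
        rw [hpow, hFdef]
        simp only []
        rw [ENNReal.ofReal_mul (by positivity)]
        ring
      rw [hcongr, lintegral_const_mul' _ _ (by
        exact ENNReal.mul_ne_top (by norm_num) ENNReal.ofReal_ne_top)]
      exact ENNReal.mul_lt_top (ENNReal.mul_lt_top (by norm_num)
        ENNReal.ofReal_lt_top) hhalf
    exact ENNReal.mul_lt_top ENNReal.ofReal_lt_top hinner
  -- integrability of M^{2β}
  have hMp : Integrable (fun ω => M ω ^ (2 * β)) μ := by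
    constructor
    · exact ((hMm.pow_const (2 * β)).aestronglyMeasurable)
    · rw [HasFiniteIntegral]
      have : ∀ ω, ‖M ω ^ (2 * β)‖ₑ = ENNReal.ofReal (M ω ^ (2 * β)) :=
        fun ω => Real.enorm_eq_ofReal (Real.rpow_nonneg (hMnn ω) _)
      simp_rw [this]
      exact hfinM
  -- conclude
  refine Integrable.mono' (hMp.const_mul 4) ?_ (Filter.Eventually.of_forall ?_)
  · have hmeas : Measurable (fun ω => hHat β Xs ω) := by
      apply Measurable.sub
      apply Measurable.add
      apply Measurable.sub
      · exact ((hXsm 0).dist (hXsm 1)).pow_const β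
      · exact ((hXsm 1).dist (hXsm 2)).pow_const β
      · exact ((hXsm 2).dist (hXsm 3)).pow_const β
      · exact ((hXsm 3).dist (hXsm 0)).pow_const β
    exact (hmeas.pow_const 2).aestronglyMeasurable
  · intro ω
    have h1 : |hHat β Xs ω| ≤ 2 * M ω ^ β := hbound ω
    have h2 : (0 : ℝ) ≤ 2 * M ω ^ β := by positivity
    have h3 : |hHat β Xs ω| ^ 2 ≤ (2 * M ω ^ β) ^ 2 :=
      pow_le_pow_left₀ (abs_nonneg _) h1 2
    have h4 : (M ω ^ β) ^ 2 = M ω ^ (2 * β) := by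
      rw [show (2 : ℝ) * β = β * (2 : ℕ) by push_cast; ring,
        Real.rpow_mul_natCast (hMnn ω)]
    calc ‖hHat β Xs ω ^ 2‖ = |hHat β Xs ω| ^ 2 := by
          rw [Real.norm_eq_abs, abs_pow]
      _ ≤ (2 * M ω ^ β) ^ 2 := h3
      _ = 4 * M ω ^ (2 * β) := by rw [mul_pow, h4]; norm_num
end
end

section
/- Let β > 0 and suppose E|ĥ_X| < ∞. Then there is a Borel measurable function g : 𝒳×𝒳 → ℝ such that g(X₁,X₂) is a version of the conditional expectation E(ĥ_X | X₁,X₂), and almost surely ĥ_X = g(X₁,X₂) − g(X₂,X₃) + g(X₃,X₄) − g(X₄,X₁). Consequently, for every p ≥ 1, ĥ_X ∈ L^p if and only if g(X₁,X₂) ∈ L^p. -/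
open MeasureTheory ProbabilityTheory
open scoped ENNReal NNReal

noncomputable section

/-- The kernel of `hHat`, as a function on `(𝒳 × 𝒳) × (𝒳 × 𝒳)`. -/
def H4 (β : ℝ) {𝒳 : Type*} [MetricSpace 𝒳] (z : (𝒳 × 𝒳) × (𝒳 × 𝒳)) : ℝ :=
  dist z.1.1 z.1.2 ^ β - dist z.1.2 z.2.1 ^ β + dist z.2.1 z.2.2 ^ β - dist z.2.2 z.1.1 ^ β

/-- Auxiliary centering function. -/
def fAux (β : ℝ) {𝒳 : Type*} [MetricSpace 𝒳] (w : 𝒳 × 𝒳) (x : 𝒳) : ℝ :=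
  (dist x w.1 ^ β + dist w.2 x ^ β - dist w.1 w.2 ^ β) / 2

/-- The centered kernel. -/
def KAux (β : ℝ) {𝒳 : Type*} [MetricSpace 𝒳] (w : 𝒳 × 𝒳) (z : 𝒳 × 𝒳) : ℝ :=
  dist z.1 z.2 ^ β - fAux β w z.1 - fAux β w z.2

section Aux

variable {𝒳 : Type*} [MetricSpace 𝒳] (β : ℝ)

lemma continuous_rpow_dist (hβ : 0 < β) {α : Type*} [TopologicalSpace α]
    {f g : α → 𝒳} (hf : Continuous f) (hg : Continuous g) :
    Continuous fun a => dist (f a) (g a) ^ β :=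
  (hf.dist hg).rpow_const (fun _ => Or.inr hβ.le)

lemma H4_continuous (hβ : 0 < β) : Continuous (H4 β (𝒳 := 𝒳)) := by
  unfold H4
  have c11 : Continuous fun z : (𝒳 × 𝒳) × (𝒳 × 𝒳) => z.1.1 := continuous_fst.fst
  have c12 : Continuous fun z : (𝒳 × 𝒳) × (𝒳 × 𝒳) => z.1.2 := continuous_fst.snd
  have c21 : Continuous fun z : (𝒳 × 𝒳) × (𝒳 × 𝒳) => z.2.1 := continuous_snd.fst
  have c22 : Continuous fun z : (𝒳 × 𝒳) × (𝒳 × 𝒳) => z.2.2 := continuous_snd.snd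
  exact (((continuous_rpow_dist β hβ c11 c12).sub
      (continuous_rpow_dist β hβ c12 c21)).add
      (continuous_rpow_dist β hβ c21 c22)).sub
      (continuous_rpow_dist β hβ c22 c11)

lemma KAux_continuous (hβ : 0 < β) (w : 𝒳 × 𝒳) : Continuous (KAux β w) := by
  unfold KAux fAux
  have h1 : Continuous fun z : 𝒳 × 𝒳 => dist z.1 z.2 ^ β :=
    continuous_rpow_dist β hβ continuous_fst continuous_snd
  have h2 : Continuous fun z : 𝒳 × 𝒳 =>
      (dist z.1 w.1 ^ β + dist w.2 z.1 ^ β - dist w.1 w.2 ^ β) / 2 :=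
    (((continuous_rpow_dist β hβ continuous_fst continuous_const).add
      (continuous_rpow_dist β hβ continuous_const continuous_fst)).sub
      continuous_const).div_const 2
  have h3 : Continuous fun z : 𝒳 × 𝒳 =>
      (dist z.2 w.1 ^ β + dist w.2 z.2 ^ β - dist w.1 w.2 ^ β) / 2 :=
    (((continuous_rpow_dist β hβ continuous_snd continuous_const).add
      (continuous_rpow_dist β hβ continuous_const continuous_snd)).sub
      continuous_const).div_const 2
  exact (h1.sub h2).sub h3

lemma H4_eq_KAux (w : 𝒳 × 𝒳) (z w' : 𝒳 × 𝒳) :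
    H4 β (z, w') = KAux β w z - KAux β w (z.2, w'.1) + KAux β w w' - KAux β w (w'.2, z.1) := by
  simp only [H4, KAux, fAux]
  ring

lemma KAux_symm (w : 𝒳 × 𝒳) (x y : 𝒳) : KAux β w (x, y) = KAux β w (y, x) := by
  simp only [KAux]
  rw [dist_comm x y]
  ring

lemma KAux_eq_half (w z : 𝒳 × 𝒳) :
    KAux β w z = (H4 β (z, w) + H4 β ((z.2, z.1), w)) / 2 := by
  simp only [H4, KAux, fAux]
  rw [dist_comm z.2 z.1]
  ring

end Aux

/-- Let `β > 0` and suppose `E|ĥ_X| < ∞`. Then there is a Borel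
measurable `g : 𝒳×𝒳 → ℝ` such that `g(X₁,X₂)` is a version of `E(ĥ_X | X₁,X₂)` and
almost surely `ĥ_X = g(X₁,X₂) − g(X₂,X₃) + g(X₃,X₄) − g(X₄,X₁)`. Consequently, for
every `p ≥ 1`, `ĥ_X ∈ L^p` iff `g(X₁,X₂) ∈ L^p`. -/
theorem stmt17 {Ω : Type*} [MeasurableSpace Ω] (μ : Measure Ω) [IsProbabilityMeasure μ]
    {𝒳 : Type*} [MetricSpace 𝒳] [TopologicalSpace.SeparableSpace 𝒳]
    [MeasurableSpace 𝒳] [BorelSpace 𝒳]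
    (β : ℝ) (hβ : 0 < β)
    (X : Ω → 𝒳) (Xs : Fin 4 → Ω → 𝒳)
    (hXm : Measurable X) (hXsm : ∀ i, Measurable (Xs i))
    (hindep : iIndepFun Xs μ)
    (hid : ∀ i, IdentDistrib (Xs i) X μ μ)
    (hint : Integrable (hHat β Xs) μ) :
    ∃ g : 𝒳 × 𝒳 → ℝ, Measurable g ∧
      (fun ω => g (Xs 0 ω, Xs 1 ω)) =ᵐ[μ]
        μ[hHat β Xs | MeasurableSpace.comap (fun ω => (Xs 0 ω, Xs 1 ω)) inferInstance] ∧
      (∀ᵐ ω ∂μ, hHat β Xs ω =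
        g (Xs 0 ω, Xs 1 ω) - g (Xs 1 ω, Xs 2 ω) + g (Xs 2 ω, Xs 3 ω) - g (Xs 3 ω, Xs 0 ω)) ∧
      (∀ p : ℝ, 1 ≤ p →
        (MemLp (hHat β Xs) (ENNReal.ofReal p) μ ↔
          MemLp (fun ω => g (Xs 0 ω, Xs 1 ω)) (ENNReal.ofReal p) μ)) := by
  classical
  haveI : SecondCountableTopology 𝒳 := UniformSpace.secondCountable_of_separable 𝒳
  -- the law of `X`
  set ν : Measure 𝒳 := μ.map X with hν
  haveI : IsProbabilityMeasure ν := Measure.isProbabilityMeasure_map hXm.aemeasurable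
  have hpm : ∀ i j : Fin 4, Measurable fun ω => (Xs i ω, Xs j ω) :=
    fun i j => (hXsm i).prodMk (hXsm j)
  have hmapi : ∀ i, μ.map (Xs i) = ν := fun i => (hid i).map_eq
  -- joint law of any pair with distinct indices is `ν ⊗ ν`
  have hpair : ∀ i j : Fin 4, i ≠ j → μ.map (fun ω => (Xs i ω, Xs j ω)) = ν.prod ν := by
    intro i j hij
    rw [(indepFun_iff_map_prod_eq_prod_map_map (hXsm i).aemeasurable
      (hXsm j).aemeasurable).mp (hindep.indepFun hij), hmapi, hmapi]
  -- joint law of the two pairs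
  set φ : Ω → (𝒳 × 𝒳) × (𝒳 × 𝒳) := fun ω => ((Xs 0 ω, Xs 1 ω), (Xs 2 ω, Xs 3 ω)) with hφ
  have hφm : Measurable φ := (hpm 0 1).prodMk (hpm 2 3)
  have hφmap : μ.map φ = (ν.prod ν).prod (ν.prod ν) := by
    rw [(indepFun_iff_map_prod_eq_prod_map_map (hpm 0 1).aemeasurable
        (hpm 2 3).aemeasurable).mp
      (hindep.indepFun_prodMk_prodMk hXsm 0 1 2 3
        (by decide) (by decide) (by decide) (by decide)),
      hpair 0 1 (by decide), hpair 2 3 (by decide)]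
  have hHm : Measurable (H4 β (𝒳 := 𝒳)) := (H4_continuous β hβ).measurable
  have hHint : Integrable (H4 β) ((ν.prod ν).prod (ν.prod ν)) := by
    rw [← hφmap]
    exact (integrable_map_measure hHm.aestronglyMeasurable hφm.aemeasurable).mpr hint
  -- pick a good point `w`
  obtain ⟨w, hw⟩ : ∃ w : 𝒳 × 𝒳, Integrable (fun z => H4 β (z, w)) (ν.prod ν) :=
    hHint.prod_left_ae.exists
  set K : 𝒳 × 𝒳 → ℝ := KAux β w with hKdef
  have hKm : Measurable K := (KAux_continuous β hβ w).measurable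
  have hKint : Integrable K (ν.prod ν) := by
    have h2 : Integrable (fun z : 𝒳 × 𝒳 => H4 β ((z.2, z.1), w)) (ν.prod ν) := hw.swap
    have hrw : K = fun z => (H4 β (z, w) + H4 β ((z.2, z.1), w)) / 2 := by
      funext z; exact KAux_eq_half β w z
    rw [hrw]
    exact (hw.add h2).div_const 2
  have hKsymm : ∀ x y, K (x, y) = K (y, x) := fun x y => KAux_symm β w x y
  set b1 : 𝒳 → ℝ := fun x => ∫ y, K (x, y) ∂ν with hb1
  have hb1sm : StronglyMeasurable b1 := hKm.stronglyMeasurable.integral_prod_right'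
  have hb1int : Integrable b1 ν := hKint.integral_prod_left
  set c0 : ℝ := ∫ z, K z ∂(ν.prod ν) with hc0
  set g : 𝒳 × 𝒳 → ℝ := fun z => K z - b1 z.1 - b1 z.2 + c0 with hg
  have hgm : Measurable g :=
    ((hKm.sub (hb1sm.measurable.comp measurable_fst)).sub
      (hb1sm.measurable.comp measurable_snd)).add measurable_const
  -- the exact pointwise decomposition
  have hdecomp : ∀ ω, hHat β Xs ω =
      g (Xs 0 ω, Xs 1 ω) - g (Xs 1 ω, Xs 2 ω) + g (Xs 2 ω, Xs 3 ω) - g (Xs 3 ω, Xs 0 ω) := by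
    intro ω
    simp only [hHat, hg, hKdef, KAux, fAux]
    ring
  have hmap_fst : (ν.prod ν).map Prod.fst = ν := by
    rw [Measure.map_fst_prod]; simp
  have hmap_snd : (ν.prod ν).map Prod.snd = ν := by
    rw [Measure.map_snd_prod]; simp
  -- `G = ∫ H (z, ·)` agrees a.e. with `g`
  set G : 𝒳 × 𝒳 → ℝ := fun z => ∫ w', H4 β (z, w') ∂(ν.prod ν) with hG
  have hGsm : StronglyMeasurable G := hHm.stronglyMeasurable.integral_prod_right'
  have hae1 : ∀ᵐ x ∂ν, Integrable (fun y => K (x, y)) ν := hKint.prod_right_ae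
  have hfstae : ∀ᵐ z ∂ν.prod ν, Integrable (fun y => K (z.1, y)) ν :=
    Measure.quasiMeasurePreserving_fst.ae hae1
  have hsndae : ∀ᵐ z ∂ν.prod ν, Integrable (fun y => K (z.2, y)) ν :=
    Measure.quasiMeasurePreserving_snd.ae hae1
  have hGg : G =ᵐ[ν.prod ν] g := by
    filter_upwards [hfstae, hsndae] with z h1 h2
    have i1 : Integrable (fun w' : 𝒳 × 𝒳 => K (z.2, w'.1)) (ν.prod ν) := by
      have hι : Integrable (fun t => K (z.2, t)) ((ν.prod ν).map Prod.fst) := by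
        rw [hmap_fst]; exact h2
      exact (integrable_map_measure (by rw [hmap_fst]; exact
        (hKm.comp measurable_prodMk_left).aestronglyMeasurable)
        measurable_fst.aemeasurable).mp hι
    have i2 : Integrable (fun w' : 𝒳 × 𝒳 => K (w'.2, z.1)) (ν.prod ν) := by
      have h1' : Integrable (fun t => K (t, z.1)) ν := by
        have hr : (fun t => K (t, z.1)) = fun t => K (z.1, t) := by
          funext t; rw [hKsymm]
        rw [hr]; exact h1
      have hι : Integrable (fun t => K (t, z.1)) ((ν.prod ν).map Prod.snd) := by
        rw [hmap_snd]; exact h1'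
      exact (integrable_map_measure (by rw [hmap_snd]; exact
        (hKm.comp measurable_prodMk_right).aestronglyMeasurable)
        measurable_snd.aemeasurable).mp hι
    have e1 : ∫ w' : 𝒳 × 𝒳, K (z.2, w'.1) ∂(ν.prod ν) = b1 z.2 := by
      have h := integral_map (μ := ν.prod ν) measurable_fst.aemeasurable
        (f := fun t => K (z.2, t)) (by rw [hmap_fst]; exact
          (hKm.comp measurable_prodMk_left).aestronglyMeasurable)
      rw [hmap_fst] at h
      rw [← h, hb1]
    have e2 : ∫ w' : 𝒳 × 𝒳, K (w'.2, z.1) ∂(ν.prod ν) = b1 z.1 := by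
      have hsym : (fun w' : 𝒳 × 𝒳 => K (w'.2, z.1)) = fun w' : 𝒳 × 𝒳 => K (z.1, w'.2) := by
        funext w'; rw [hKsymm]
      have h := integral_map (μ := ν.prod ν) measurable_snd.aemeasurable
        (f := fun t => K (z.1, t)) (by rw [hmap_snd]; exact
          (hKm.comp measurable_prodMk_left).aestronglyMeasurable)
      rw [hmap_snd] at h
      rw [hsym, ← h, hb1]
    have hsplit : (fun w' : 𝒳 × 𝒳 => H4 β (z, w'))
        = fun w' => K z - K (z.2, w'.1) + K w' - K (w'.2, z.1) := by
      funext w'; exact H4_eq_KAux β w z w'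
    have hGz : G z = ∫ w', (K z - K (z.2, w'.1) + K w' - K (w'.2, z.1)) ∂(ν.prod ν) := by
      rw [hG]
      simp only []
      rw [hsplit]
    have ia1 : Integrable (fun w' : 𝒳 × 𝒳 => K z - K (z.2, w'.1)) (ν.prod ν) :=
      (integrable_const (K z)).sub i1
    have ia2 : Integrable (fun w' : 𝒳 × 𝒳 => K z - K (z.2, w'.1) + K w') (ν.prod ν) :=
      ia1.add hKint
    rw [hGz, integral_sub ia2 i2, integral_add ia1 hKint,
      integral_sub (integrable_const (K z)) i1, integral_const, e1, e2, ← hc0]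
    simp only [hg, Measure.real, measure_univ, ENNReal.toReal_one, mul_one]
    ring
  -- conditional expectation
  have hm_le : MeasurableSpace.comap (fun ω => (Xs 0 ω, Xs 1 ω)) inferInstance
      ≤ ‹MeasurableSpace Ω› := (hpm 0 1).comap_le
  haveI : SigmaFinite (μ.trim hm_le) := by
    haveI : IsFiniteMeasure (μ.trim hm_le) := isFiniteMeasure_trim hm_le
    infer_instance
  have hgν : Integrable g (ν.prod ν) := by
    have hfst' : Integrable (fun z : 𝒳 × 𝒳 => b1 z.1) (ν.prod ν) := by
      have hι : Integrable b1 ((ν.prod ν).map Prod.fst) := by rw [hmap_fst]; exact hb1int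
      exact (integrable_map_measure (by rw [hmap_fst]; exact hb1sm.aestronglyMeasurable)
        measurable_fst.aemeasurable).mp hι
    have hsnd' : Integrable (fun z : 𝒳 × 𝒳 => b1 z.2) (ν.prod ν) := by
      have hι : Integrable b1 ((ν.prod ν).map Prod.snd) := by rw [hmap_snd]; exact hb1int
      exact (integrable_map_measure (by rw [hmap_snd]; exact hb1sm.aestronglyMeasurable)
        measurable_snd.aemeasurable).mp hι
    rw [hg]
    exact ((hKint.sub hfst').sub hsnd').add (integrable_const c0)
  have hgpair_int : Integrable (fun ω => g (Xs 0 ω, Xs 1 ω)) μ := by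
    have hι : Integrable g (μ.map (fun ω => (Xs 0 ω, Xs 1 ω))) := by
      rw [hpair 0 1 (by decide)]; exact hgν
    exact (integrable_map_measure hgm.aestronglyMeasurable (hpm 0 1).aemeasurable).mp hι
  have hce : (fun ω => g (Xs 0 ω, Xs 1 ω)) =ᵐ[μ]
      μ[hHat β Xs | MeasurableSpace.comap (fun ω => (Xs 0 ω, Xs 1 ω)) inferInstance] := by
    refine ae_eq_condExp_of_forall_setIntegral_eq hm_le hint
      (fun s _ _ => hgpair_int.integrableOn) ?_ ?_
    · intro s hs _
      obtain ⟨E, hE, rfl⟩ := hs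
      have hmapg : ∫ z in E, g z ∂(ν.prod ν)
          = ∫ ω in (fun ω => (Xs 0 ω, Xs 1 ω)) ⁻¹' E, g (Xs 0 ω, Xs 1 ω) ∂μ := by
        rw [← hpair 0 1 (by decide)]
        exact setIntegral_map hE hgm.aestronglyMeasurable (hpm 0 1).aemeasurable
      have hpre : (fun ω => (Xs 0 ω, Xs 1 ω)) ⁻¹' E = φ ⁻¹' (E ×ˢ Set.univ) := by
        ext ω; simp [hφ]
      have hmapH : ∫ z in E ×ˢ Set.univ, H4 β z ∂((ν.prod ν).prod (ν.prod ν))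
          = ∫ ω in (fun ω => (Xs 0 ω, Xs 1 ω)) ⁻¹' E, hHat β Xs ω ∂μ := by
        rw [← hφmap, setIntegral_map (hE.prod MeasurableSet.univ)
          hHm.aestronglyMeasurable hφm.aemeasurable, hpre]
        rfl
      have hfub : ∫ z in E ×ˢ Set.univ, H4 β z ∂((ν.prod ν).prod (ν.prod ν))
          = ∫ z in E, G z ∂(ν.prod ν) := by
        rw [setIntegral_prod _ hHint.integrableOn]
        simp only [Measure.restrict_univ, hG]
      have hGgE : ∫ z in E, G z ∂(ν.prod ν) = ∫ z in E, g z ∂(ν.prod ν) :=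
        setIntegral_congr_ae hE (hGg.mono fun z hz _ => hz)
      calc ∫ ω in (fun ω => (Xs 0 ω, Xs 1 ω)) ⁻¹' E, g (Xs 0 ω, Xs 1 ω) ∂μ
          = ∫ z in E, g z ∂(ν.prod ν) := hmapg.symm
        _ = ∫ z in E, G z ∂(ν.prod ν) := hGgE.symm
        _ = ∫ z in E ×ˢ Set.univ, H4 β z ∂((ν.prod ν).prod (ν.prod ν)) := hfub.symm
        _ = ∫ ω in (fun ω => (Xs 0 ω, Xs 1 ω)) ⁻¹' E, hHat β Xs ω ∂μ := hmapH
    · have hp01c : Measurable[MeasurableSpace.comap (fun ω => (Xs 0 ω, Xs 1 ω)) inferInstance]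
          (fun ω => (Xs 0 ω, Xs 1 ω)) := fun t ht => ⟨t, ht, rfl⟩
      exact StronglyMeasurable.aestronglyMeasurable
        ((hgm.comp hp01c).stronglyMeasurable)
  refine ⟨g, hgm, hce, Filter.Eventually.of_forall hdecomp, ?_⟩
  -- the `L^p` equivalence
  intro p hp
  have hp0 : (0 : ℝ) < p := lt_of_lt_of_le one_pos hp
  set e : ℝ≥0∞ := ENNReal.ofReal p with he
  have he1 : 1 ≤ e := by rw [he]; exact ENNReal.one_le_ofReal.mpr hp
  have he0 : e ≠ 0 := (zero_lt_one.trans_le he1).ne'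
  have heT : e ≠ ⊤ := by rw [he]; exact ENNReal.ofReal_ne_top
  have hetoReal : e.toReal = p := by rw [he, ENNReal.toReal_ofReal hp0.le]
  constructor
  · intro hh
    have hHe : MemLp (H4 β) e ((ν.prod ν).prod (ν.prod ν)) := by
      rw [← hφmap]
      exact (memLp_map_measure_iff hHm.aestronglyMeasurable hφm.aemeasurable).mpr hh
    have hHlint : ∫⁻ zw, (‖H4 β zw‖₊ : ℝ≥0∞) ^ p ∂((ν.prod ν).prod (ν.prod ν)) < ⊤ := by
      have h2 := hHe.2
      rw [eLpNorm_eq_lintegral_rpow_enorm_toReal he0 heT, hetoReal] at h2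
      exact (ENNReal.rpow_lt_top_iff_of_pos (by positivity : (0:ℝ) < 1/p)).mp h2
    have hmeasHp : Measurable fun zw : (𝒳 × 𝒳) × (𝒳 × 𝒳) => (‖H4 β zw‖₊ : ℝ≥0∞) ^ p :=
      hHm.enorm.pow_const p
    have key : ∀ᵐ z ∂ν.prod ν, (‖G z‖₊ : ℝ≥0∞) ^ p
        ≤ ∫⁻ w', (‖H4 β (z, w')‖₊ : ℝ≥0∞) ^ p ∂(ν.prod ν) := by
      filter_upwards [hHint.prod_right_ae] with z hz
      have hb : (‖G z‖₊ : ℝ≥0∞) ≤ eLpNorm (fun w' => H4 β (z, w')) e (ν.prod ν) := by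
        calc (‖G z‖₊ : ℝ≥0∞) ≤ ∫⁻ w', ‖H4 β (z, w')‖₊ ∂(ν.prod ν) :=
              enorm_integral_le_lintegral_enorm _
          _ = eLpNorm (fun w' => H4 β (z, w')) 1 (ν.prod ν) :=
              (eLpNorm_one_eq_lintegral_enorm (f := fun w' => H4 β (z, w'))).symm
          _ ≤ eLpNorm (fun w' => H4 β (z, w')) e (ν.prod ν) :=
              eLpNorm_le_eLpNorm_of_exponent_le he1 hz.aestronglyMeasurable
      calc (‖G z‖₊ : ℝ≥0∞) ^ p ≤ (eLpNorm (fun w' => H4 β (z, w')) e (ν.prod ν)) ^ p :=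
            ENNReal.rpow_le_rpow hb hp0.le
        _ = ∫⁻ w', (‖H4 β (z, w')‖₊ : ℝ≥0∞) ^ p ∂(ν.prod ν) := by
            rw [eLpNorm_eq_lintegral_rpow_enorm_toReal he0 heT, hetoReal, one_div,
              ← ENNReal.rpow_mul, inv_mul_cancel₀ hp0.ne', ENNReal.rpow_one]; rfl
    have hGlint : ∫⁻ z, (‖G z‖₊ : ℝ≥0∞) ^ p ∂(ν.prod ν) < ⊤ := by
      calc ∫⁻ z, (‖G z‖₊ : ℝ≥0∞) ^ p ∂(ν.prod ν)
          ≤ ∫⁻ z, (∫⁻ w', (‖H4 β (z, w')‖₊ : ℝ≥0∞) ^ p ∂(ν.prod ν)) ∂(ν.prod ν) :=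
            lintegral_mono_ae key
        _ = ∫⁻ zw, (‖H4 β zw‖₊ : ℝ≥0∞) ^ p ∂((ν.prod ν).prod (ν.prod ν)) :=
            (lintegral_prod _ hmeasHp.aemeasurable).symm
        _ < ⊤ := hHlint
    have hGe : MemLp G e (ν.prod ν) := by
      refine ⟨hGsm.aestronglyMeasurable, ?_⟩
      rw [eLpNorm_eq_lintegral_rpow_enorm_toReal he0 heT, hetoReal]
      exact ENNReal.rpow_lt_top_of_nonneg (by positivity) hGlint.ne
    have hge : MemLp g e (ν.prod ν) := hGe.ae_eq hGg
    have hι : MemLp g e (μ.map (fun ω => (Xs 0 ω, Xs 1 ω))) := by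
      rw [hpair 0 1 (by decide)]; exact hge
    exact (memLp_map_measure_iff hgm.aestronglyMeasurable (hpm 0 1).aemeasurable).mp hι
  · intro hg01
    have hgid : ∀ i j : Fin 4, i ≠ j → MemLp (fun ω => g (Xs i ω, Xs j ω)) e μ := by
      intro i j hij
      have hmm : ∀ k l : Fin 4, k ≠ l →
          μ.map (fun ω => g (Xs k ω, Xs l ω)) = (ν.prod ν).map g := by
        intro k l hkl
        have h := Measure.map_map (μ := μ) hgm (hpm k l)
        rw [hpair k l hkl] at h
        show μ.map (g ∘ fun ω => (Xs k ω, Xs l ω)) = (ν.prod ν).map g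
        exact h.symm
      have hident : IdentDistrib (fun ω => g (Xs 0 ω, Xs 1 ω))
          (fun ω => g (Xs i ω, Xs j ω)) μ μ :=
        ⟨(hgm.comp (hpm 0 1)).aemeasurable, (hgm.comp (hpm i j)).aemeasurable, by
          rw [hmm 0 1 (by decide), hmm i j hij]⟩
      exact hident.memLp_snd hg01
    have hsum := (((hgid 0 1 (by decide)).sub (hgid 1 2 (by decide))).add
        (hgid 2 3 (by decide))).sub (hgid 3 0 (by decide))
    exact hsum.ae_eq (Filter.Eventually.of_forall fun ω => by
      simp only [Pi.sub_apply, Pi.add_apply]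
      exact (hdecomp ω).symm)
end
end
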